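/- arXiv:1505.00607 — 4 statements merged into one kernel-verified Lean document; each statement's English description precedes it below -/
import Mathlib

section
/- Let G be a proper convex subdomain of ℝⁿ, x, y ∈ G, and t = e^{j_G(x,y)} − 1. Then arcsin(t/(t+2)) ≤ v_G(x,y) ≤ 2 arcsin(t/√(4+t²)). -/
open Real Set Metric

open scoped InnerProductSpace

/-- A preconnected set meeting both `t` and its complement meets the frontier of `t`. -/
lemma aux_cross_frontier {X : Type*} [TopologicalSpace X] {s t : Set X}
    (hs : IsPreconnected s) (h1 : (s ∩ t).Nonempty) (h2 : (s \ t).Nonempty) :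
    (s ∩ frontier t).Nonempty := by
  by_contra h
  rw [Set.not_nonempty_iff_eq_empty] at h
  have hnf : ∀ p ∈ s, p ∉ frontier t := by
    intro p hp hf
    exact absurd (Set.eq_empty_iff_forall_notMem.1 h p) (by simp [hp, hf])
  have hsub : s ⊆ interior t ∪ (closure t)ᶜ := by
    intro p hp
    by_cases hcl : p ∈ closure t
    · left
      by_contra hint
      exact hnf p hp ⟨hcl, hint⟩
    · right; exact hcl
  have h1' : (s ∩ interior t).Nonempty := by
    obtain ⟨p, hps, hpt⟩ := h1
    refine ⟨p, hps, ?_⟩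
    by_contra hint
    exact hnf p hps ⟨subset_closure hpt, hint⟩
  have h2' : (s ∩ (closure t)ᶜ).Nonempty := by
    obtain ⟨p, hps, hpt⟩ := h2
    refine ⟨p, hps, ?_⟩
    intro hcl
    exact hnf p hps ⟨hcl, fun hint => hpt (interior_subset hint)⟩
  obtain ⟨q, _, hq2⟩ := hs (interior t) (closure t)ᶜ isOpen_interior
    isClosed_closure.isOpen_compl hsub h1' h2'
  exact hq2.2 (interior_subset.trans subset_closure hq2.1)

lemma aux_dist_le_of_mem_segment {E : Type*} [NormedAddCommGroup E] [NormedSpace ℝ E]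
    {p q z : E} (hz : z ∈ segment ℝ p q) : dist p z ≤ dist p q := by
  obtain ⟨σ, ρ, hσ, hρ, hsum, rfl⟩ := hz
  have hσ' : σ = 1 - ρ := by linarith
  subst hσ'
  have : p - ((1 - ρ) • p + ρ • q) = ρ • (p - q) := by module
  rw [dist_eq_norm, this, norm_smul, dist_eq_norm, Real.norm_eq_abs, abs_of_nonneg hρ]
  have hρ1 : ρ ≤ 1 := by linarith
  nlinarith [norm_nonneg (p - q)]
lemma aux_mem_of_dist_lt_infDist {E : Type*} [NormedAddCommGroup E] [NormedSpace ℝ E]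
    {G : Set E} {p w : E} (hp : p ∈ G) (h : dist p w < infDist p (frontier G)) : w ∈ G := by
  by_contra hw
  obtain ⟨z, hzseg, hzF⟩ := aux_cross_frontier (convex_segment p w).isPreconnected
    ⟨p, left_mem_segment ℝ p w, hp⟩ ⟨w, right_mem_segment ℝ p w, hw⟩
  have h1 : infDist p (frontier G) ≤ dist p z := infDist_le_dist_of_mem hzF
  have h2 : dist p z ≤ dist p w := aux_dist_le_of_mem_segment hzseg
  linarith

lemma aux_angle_le_of_cos_le {θ B : ℝ} (hθ0 : 0 ≤ θ) (hθπ : θ ≤ π) (hB0 : 0 ≤ B)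
    (hBπ : B ≤ π) (h : Real.cos B ≤ Real.cos θ) : θ ≤ B := by
  by_contra hc
  push_neg at hc
  have := Real.strictAntiOn_cos ⟨hB0, hBπ⟩ ⟨hθ0, hθπ⟩ hc
  linarith

lemma aux_comb_inner {E : Type*} [NormedAddCommGroup E] [InnerProductSpace ℝ E] {u e : E}
    (hu : ‖u‖ = 1) (he : ‖e‖ = 1) (hue : ⟪u, e⟫_ℝ = 0) (α β γ δ : ℝ) :
    ⟪α • u + β • e, γ • u + δ • e⟫_ℝ = α * γ + β * δ := by
  have h1 : ⟪u, u⟫_ℝ = 1 := by rw [real_inner_self_eq_norm_sq, hu]; norm_num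
  have h2 : ⟪e, e⟫_ℝ = 1 := by rw [real_inner_self_eq_norm_sq, he]; norm_num
  have h3 : ⟪e, u⟫_ℝ = 0 := by rw [real_inner_comm]; exact hue
  rw [inner_add_left, inner_add_right, inner_add_right, real_inner_smul_left,
    real_inner_smul_left, real_inner_smul_left, real_inner_smul_left,
    real_inner_smul_right, real_inner_smul_right, real_inner_smul_right,
    real_inner_smul_right, h1, h2, h3, hue]
  ring

lemma aux_comb_norm_sq {E : Type*} [NormedAddCommGroup E] [InnerProductSpace ℝ E] {u e : E}
    (hu : ‖u‖ = 1) (he : ‖e‖ = 1) (hue : ⟪u, e⟫_ℝ = 0) (α β : ℝ) :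
    ‖α • u + β • e‖ ^ 2 = α ^ 2 + β ^ 2 := by
  rw [← real_inner_self_eq_norm_sq, aux_comb_inner hu he hue]
  ring

lemma aux_caseA (r c u v : ℝ) (hr : 0 < r) (hc : 0 < c) (hru : r ≤ u) (hv : 0 ≤ v)
    (h1 : c^2 + u^2 ≤ v^2) (h2 : v ≤ u + c) :
    4*r^2*(c^2 - (u-v)^2) ≤ c^2*((u+v)^2 - c^2) := by
  have huv : u ≤ v := by nlinarith
  have hcc : (u-v)^2 ≤ c^2 := by nlinarith
  have t1 : 0 ≤ c^2*(v^2 - u^2 - c^2) := mul_nonneg (sq_nonneg c) (by linarith)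
  have t2 : 0 ≤ u*(v-u)*c^2 := mul_nonneg (mul_nonneg (by linarith) (by linarith)) (sq_nonneg c)
  have t3 : 0 ≤ u^2*(v-u)^2 := mul_nonneg (sq_nonneg u) (sq_nonneg _)
  have t4 : 4*r^2*(c^2 - (u-v)^2) ≤ 4*u^2*(c^2-(u-v)^2) := by
    have : r^2 ≤ u^2 := by nlinarith
    nlinarith [mul_le_mul_of_nonneg_right this (by linarith : (0:ℝ) ≤ c^2 - (u-v)^2)]
  nlinarith [t1,t2,t3,t4]

lemma aux_caseC (r c u v : ℝ) (hr : 0 < r) (hc : 0 < c) (htri : c ≤ u + v)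
    (hh : 4*c^2*r^2 ≤ (c^2-(u-v)^2)*((u+v)^2-c^2)) :
    4*r^2*(c^2 - (u-v)^2) ≤ c^2*((u+v)^2 - c^2) := by
  nlinarith [sq_nonneg (u-v), sq_nonneg c, mul_nonneg (sq_nonneg (u-v)) (sub_nonneg.2 (by nlinarith : c^2 ≤ (u+v)^2))]

lemma aux_lower_core (r c s a b τ : ℝ) (hr : 0 < r) (hc : 0 < c) (hs : 0 ≤ s)
    (hs2 : s^2 = r^2 + r*c) (ha : 0 ≤ a) (hb : 0 ≤ b) (habc : a^2 + b^2 = c^2)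
    (hτ0 : 0 < τ) (hτ1 : τ ≤ 1) (hL : 0 ≤ r*(a+τ*r) - s*(b-τ*s)) :
    (2*r+c)^2 * (r*(a+τ*r) - s*(b-τ*s))^2
      ≤ 4*s^2*(r^2+s^2)*((a+τ*r)^2+(b-τ*s)^2) := by
  set L := r*(a+τ*r) - s*(b-τ*s) with hLdef
  set M := s*a + r*b with hMdef
  have hrs : r ≤ s := by nlinarith
  have hab : c ≤ a + b := by nlinarith [sq_nonneg (a+b-c)]
  have hM0 : 0 ≤ M := by positivity
  have hid : 2*s*M - c*L = (2*r+c)*(r*a+s*b-τ*r*c) := by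
    rw [hMdef, hLdef]; linear_combination (2*a - τ*c)*hs2
  have h1 : r*c ≤ r*a + s*b := by nlinarith [mul_le_mul_of_nonneg_right hrs hb]
  have h2 : τ*r*c ≤ r*c := by nlinarith [mul_nonneg (mul_nonneg (by linarith : (0:ℝ) ≤ 1-τ) hr.le) hc.le]
  have hM : c*L ≤ 2*s*M := by nlinarith [hid]
  have hsq : (2*r+c)^2 = c^2 + 4*s^2 := by linear_combination -4*hs2
  have hLag : (r^2+s^2)*((a+τ*r)^2+(b-τ*s)^2) = L^2 + M^2 := by rw [hLdef, hMdef]; ring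
  have hcl : (c*L)^2 ≤ (2*s*M)^2 := pow_le_pow_left₀ (mul_nonneg hc.le hL) hM 2
  nlinarith [hcl, hsq, hLag]

/-- The visual angle metric. -/
noncomputable def visualAngle {n : ℕ} (G : Set (EuclideanSpace ℝ (Fin n)))
    (x y : EuclideanSpace ℝ (Fin n)) : ℝ :=
  sSup ((fun z => EuclideanGeometry.angle x z y) '' frontier G)

/-- The distance ratio metric `j_G`. -/
noncomputable def jMetric {n : ℕ} (G : Set (EuclideanSpace ℝ (Fin n)))
    (x y : EuclideanSpace ℝ (Fin n)) : ℝ :=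
  Real.log (1 + dist x y / min (infDist x (frontier G)) (infDist y (frontier G)))

lemma aux_exists_orth {n : ℕ} (hn : 2 ≤ n) (u : EuclideanSpace ℝ (Fin n)) (hu : u ≠ 0) :
    ∃ e : EuclideanSpace ℝ (Fin n), ‖e‖ = 1 ∧ ⟪u, e⟫_ℝ = 0 := by
  have hK : ((ℝ ∙ u)ᗮ : Submodule ℝ (EuclideanSpace ℝ (Fin n))) ≠ ⊥ := by
    intro hbot
    have h1 := Submodule.finrank_add_finrank_orthogonal (K := (ℝ ∙ u : Submodule ℝ (EuclideanSpace ℝ (Fin n))))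
    rw [hbot, finrank_bot, finrank_span_singleton hu, finrank_euclideanSpace_fin] at h1
    omega
  obtain ⟨w, hwK, hw0⟩ := Submodule.exists_mem_ne_zero_of_ne_bot hK
  refine ⟨‖w‖⁻¹ • w, ?_, ?_⟩
  · rw [norm_smul, norm_inv, norm_norm, inv_mul_cancel₀ (norm_ne_zero_iff.2 hw0)]
  · rw [real_inner_smul_right,
      (Submodule.mem_orthogonal _ _).1 hwK u (Submodule.mem_span_singleton_self u), mul_zero]

set_option maxHeartbeats 4000000 in
theorem aux_key {n : ℕ} (hn : 2 ≤ n) {G : Set (EuclideanSpace ℝ (Fin n))}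
    (hopen : IsOpen G) (hconv : Convex ℝ G) (hne : G.Nonempty) (hproper : G ≠ univ)
    {x y : EuclideanSpace ℝ (Fin n)} (hx : x ∈ G) (hy : y ∈ G) (hxy : x ≠ y)
    (hle : infDist x (frontier G) ≤ infDist y (frontier G)) :
    Real.arcsin (dist x y / (dist x y + 2 * infDist x (frontier G))) ≤ visualAngle G x y ∧
    visualAngle G x y ≤
      2 * Real.arcsin (dist x y / Real.sqrt (4 * infDist x (frontier G) ^ 2 + dist x y ^ 2)) := by
  haveI : PreconnectedSpace (EuclideanSpace ℝ (Fin n)) := ⟨convex_univ.isPreconnected⟩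
  set F := frontier G with hFdef
  have hFc : IsClosed F := isClosed_frontier
  have hFne : F.Nonempty := nonempty_frontier_iff.2 ⟨hne, hproper⟩
  have hdisj : ∀ w ∈ F, w ∉ G := by
    intro w hw hwG
    have hmem : w ∈ G ∩ frontier G := ⟨hwG, hw⟩
    rw [hopen.inter_frontier_eq] at hmem
    exact hmem
  set r := infDist x F with hrdef
  have hxF : x ∉ F := fun h => hdisj x h hx
  have hr : 0 < r := (hFc.notMem_iff_infDist_pos hFne).1 hxF
  set c := dist x y with hcdef
  have hc : 0 < c := dist_pos.2 hxy
  have hzx : ∀ z ∈ F, r ≤ dist x z := fun z hz => infDist_le_dist_of_mem hz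
  have hzy : ∀ z ∈ F, r ≤ dist y z := fun z hz => hle.trans (infDist_le_dist_of_mem hz)
  have hbdd : BddAbove ((fun z => EuclideanGeometry.angle x z y) '' F) := by
    refine ⟨π, ?_⟩
    rintro _ ⟨w, hw, rfl⟩
    exact EuclideanGeometry.angle_le_pi _ _ _
  constructor
  · -- lower bound
    obtain ⟨z₀, hz₀F, hdz₀⟩ := hFc.exists_infDist_eq_dist hFne x
    have hrz : ‖x - z₀‖ = r := by rw [← dist_eq_norm]; exact hdz₀.symm
    set u := r⁻¹ • (x - z₀) with hudef
    have hu1 : ‖u‖ = 1 := by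
      rw [hudef, norm_smul, Real.norm_eq_abs, abs_of_pos (inv_pos.2 hr), hrz,
        inv_mul_cancel₀ hr.ne']
    have hru : r • u = x - z₀ := by
      rw [hudef, smul_smul, mul_inv_cancel₀ hr.ne', one_smul]
    have hxzu : ⟪x - z₀, u⟫_ℝ = r := by
      rw [hudef, real_inner_smul_right, real_inner_self_eq_norm_sq, hrz]
      field_simp
    have hsupp0 : ∀ g ∈ G, ¬(⟪g - z₀, u⟫_ℝ < 0) := by
      intro g hg hlt
      set av := ⟪g - z₀, u⟫_ℝ with hav
      set M := ‖g - x‖ with hM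
      set lam := min (1/2 : ℝ) ((-(r*av))/(|M^2 - r^2|+1)) with hlam
      have hra : 0 < -(r*av) := by have h := mul_pos hr (neg_pos.2 hlt); linarith [h]
      have habs : (0:ℝ) ≤ |M^2-r^2| := abs_nonneg _
      have hlam0 : 0 < lam := lt_min (by norm_num) (div_pos hra (by linarith))
      have hlam12 : lam ≤ 1/2 := min_le_left _ _
      have hlam1 : lam < 1 := by linarith
      have hlamle : lam ≤ (-(r*av))/(|M^2-r^2|+1) := min_le_right _ _
      have hkey : 2*r*av + lam*(M^2-r^2) < 0 := by
        have h1 : lam*(M^2-r^2) ≤ lam*|M^2-r^2| :=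
          mul_le_mul_of_nonneg_left (le_abs_self _) hlam0.le
        have h2 : lam*|M^2-r^2| ≤ (-(r*av))/(|M^2-r^2|+1)*|M^2-r^2| :=
          mul_le_mul_of_nonneg_right hlamle habs
        have h3 : (-(r*av))/(|M^2-r^2|+1)*|M^2-r^2| ≤ -(r*av) := by
          rw [div_mul_eq_mul_div, div_le_iff₀ (by linarith : (0:ℝ) < |M^2-r^2|+1)]
          exact mul_le_mul_of_nonneg_left (by linarith) hra.le
        linarith
      set bb := (1-lam)⁻¹ • (z₀ - lam • g) with hbb
      have h1lam : (1:ℝ) - lam ≠ 0 := by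
        have : (0:ℝ) < 1 - lam := by linarith
        exact this.ne'
      have hz₀eq : z₀ = lam • g + (1-lam) • bb := by
        rw [hbb, smul_inv_smul₀ h1lam]; abel
      have hxbb : x - bb = (1-lam)⁻¹ • (lam • (g - x) + (x - z₀)) := by
        have hstep : (1-lam) • (x - bb) = lam • (g - x) + (x - z₀) := by
          rw [hbb, smul_sub, smul_inv_smul₀ h1lam]; module
        rw [← hstep, inv_smul_smul₀ h1lam]
      have hgxu : ⟪g - x, u⟫_ℝ = av - r := by
        have hgx : g - x = (g - z₀) - (x - z₀) := by abel
        rw [hgx, inner_sub_left, hxzu, ← hav]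
      have hi : ⟪g - x, x - z₀⟫_ℝ = r*(av - r) := by
        rw [← hru, real_inner_smul_right, hgxu]
      have hnx : ‖x - bb‖^2 = (1-lam)⁻¹^2 * (lam^2*M^2 + 2*lam*(r*(av-r)) + r^2) := by
        rw [hxbb, norm_smul, mul_pow, Real.norm_eq_abs, sq_abs]
        congr 1
        rw [norm_add_sq_real, norm_smul, Real.norm_eq_abs, real_inner_smul_left, hi, hrz,
          abs_of_pos hlam0, ← hM]
        ring
      have hlt2 : ‖x - bb‖^2 < r^2 := by
        rw [hnx]
        have hq := mul_lt_mul_of_pos_left hkey hlam0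
        have hstep : lam^2*M^2 + 2*lam*(r*(av-r)) + r^2 < (1-lam)^2*r^2 := by linarith [hq]
        have h2 := mul_lt_mul_of_pos_left hstep (by positivity : (0:ℝ) < (1-lam)⁻¹^2)
        have h3 : (1-lam)⁻¹^2 * ((1-lam)^2*r^2) = r^2 := by
          field_simp
        linarith
      have hdistxb : dist x bb < r := by
        rw [dist_eq_norm]
        exact lt_of_pow_lt_pow_left₀ 2 hr.le hlt2
      have hbbG : bb ∈ G := aux_mem_of_dist_lt_infDist hx hdistxb
      have hz₀G : z₀ ∈ G := by
        rw [hz₀eq]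
        exact hconv hg hbbG hlam0.le (by linarith) (by ring)
      exact hdisj z₀ hz₀F hz₀G
    have hsupp : ∀ g ∈ G, 0 < ⟪g - z₀, u⟫_ℝ := by
      intro g hg
      rcases lt_trichotomy (⟪g - z₀, u⟫_ℝ) 0 with hlt | heq | hpos
      · exact absurd hlt (hsupp0 g hg)
      · exfalso
        obtain ⟨ε, hε, hball⟩ := Metric.isOpen_iff.1 hopen g hg
        have hg' : g - (ε/2) • u ∈ G := by
          apply hball
          rw [mem_ball, dist_eq_norm]
          have hrw : g - (ε/2) • u - g = -((ε/2) • u) := by abel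
          rw [hrw, norm_neg, norm_smul, Real.norm_eq_abs, abs_of_pos (by linarith), hu1]
          linarith
        refine hsupp0 (g - (ε/2) • u) hg' ?_
        have hrw : g - (ε/2) • u - z₀ = (g - z₀) - (ε/2) • u := by abel
        rw [hrw, inner_sub_left, heq, real_inner_smul_left, real_inner_self_eq_norm_sq, hu1]
        linarith
      · exact hpos
    have hy₁pos : 0 < ⟪y - z₀, u⟫_ℝ := hsupp y hy
    set y₁ := ⟪y - z₀, u⟫_ℝ with hy₁
    have hy₁r : r ≤ y₁ := by
      set p := y - y₁ • u with hp
      have hpG : p ∉ G := by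
        intro hpmem
        have hps := hsupp p hpmem
        have hcalc : ⟪p - z₀, u⟫_ℝ = 0 := by
          have hrw : p - z₀ = (y - z₀) - y₁ • u := by rw [hp]; abel
          rw [hrw, inner_sub_left, real_inner_smul_left, real_inner_self_eq_norm_sq, hu1, ← hy₁]
          ring
        rw [hcalc] at hps
        exact lt_irrefl 0 hps
      obtain ⟨wq, hwseg, hwF⟩ := aux_cross_frontier (convex_segment y p).isPreconnected
        ⟨y, left_mem_segment ℝ y p, hy⟩ ⟨p, right_mem_segment ℝ y p, hpG⟩
      have h1 : infDist y F ≤ dist y wq := infDist_le_dist_of_mem hwF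
      have h2 : dist y wq ≤ dist y p := aux_dist_le_of_mem_segment hwseg
      have h3 : dist y p = y₁ := by
        rw [hp, dist_eq_norm]
        have hrw : y - (y - y₁ • u) = y₁ • u := by abel
        rw [hrw, norm_smul, Real.norm_eq_abs, abs_of_pos hy₁pos, hu1, mul_one]
      linarith [hle]
    have hau : ⟪y - x, u⟫_ℝ = y₁ - r := by
      have hrw : y - x = (y - z₀) - (x - z₀) := by abel
      rw [hrw, inner_sub_left, hxzu, ← hy₁]
    set aa := y₁ - r with haa
    have haa0 : 0 ≤ aa := by rw [haa]; linarith
    have hexists : ∃ e₂ : EuclideanSpace ℝ (Fin n), ∃ b' : ℝ,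
        ‖e₂‖ = 1 ∧ ⟪u, e₂⟫_ℝ = 0 ∧ 0 ≤ b' ∧ y - x = aa • u + b' • e₂ := by
      by_cases hv0 : y - x - aa • u = 0
      · obtain ⟨e₂, he₂, hue₂⟩ := aux_exists_orth hn u (fun h => by simp [h] at hu1)
        refine ⟨e₂, 0, he₂, hue₂, le_refl 0, ?_⟩
        rw [zero_smul, add_zero]
        exact sub_eq_zero.1 hv0
      · set v0 := y - x - aa • u with hv0def
        have hnv0 : 0 < ‖v0‖ := norm_pos_iff.2 hv0
        have h0uyx : ⟪u, y - x⟫_ℝ = aa := by rw [real_inner_comm]; exact hau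
        have hiuv : ⟪u, v0⟫_ℝ = 0 := by
          rw [hv0def, inner_sub_right, real_inner_smul_right, real_inner_self_eq_norm_sq, hu1,
            h0uyx]
          ring
        refine ⟨‖v0‖⁻¹ • v0, ‖v0‖, ?_, ?_, norm_nonneg _, ?_⟩
        · rw [norm_smul, norm_inv, norm_norm, inv_mul_cancel₀ hnv0.ne']
        · rw [real_inner_smul_right, hiuv, mul_zero]
        · rw [smul_inv_smul₀ hnv0.ne', hv0def]; abel
    obtain ⟨e₂, b', he₂, hue₂, hb'0, hyx⟩ := hexists
    have habc : aa^2 + b'^2 = c^2 := by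
      have h1 : ‖y - x‖ = c := by rw [← dist_eq_norm, dist_comm]
      have h2 := aux_comb_norm_sq hu1 he₂ hue₂ aa b'
      rw [← hyx, h1] at h2
      linarith
    set s := Real.sqrt (r^2 + r*c) with hsdef
    have hs2 : s^2 = r^2 + r*c := Real.sq_sqrt (by positivity)
    have hs0 : 0 < s := Real.sqrt_pos.2 (by positivity)
    set T := x + (s • e₂ - r • u) with hT
    have hTG : T ∉ G := by
      intro hTmem
      have hps := hsupp T hTmem
      have hcalc : ⟪T - z₀, u⟫_ℝ = 0 := by
        have he₂u : ⟪e₂, u⟫_ℝ = 0 := by rw [real_inner_comm]; exact hue₂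
        have hrw : T - z₀ = s • e₂ := by
          have h1 : T - z₀ = s • e₂ + ((x - z₀) - r • u) := by rw [hT]; module
          rw [hru, sub_self, add_zero] at h1
          exact h1
        rw [hrw, real_inner_smul_left, he₂u, mul_zero]
      rw [hcalc] at hps
      exact lt_irrefl 0 hps
    obtain ⟨z, hzseg, hzF⟩ := aux_cross_frontier (convex_segment x T).isPreconnected
      ⟨x, left_mem_segment ℝ x T, hx⟩ ⟨T, right_mem_segment ℝ x T, hTG⟩
    obtain ⟨σ, τ, hσ0, hτ0', hστ, hzrep⟩ := hzseg
    have hσeq : σ = 1 - τ := by linarith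
    have hzx' : x - z = τ • ((r:ℝ) • u - s • e₂) := by
      rw [← hzrep, hσeq, hT]; module
    have hτpos : 0 < τ := by
      rcases eq_or_lt_of_le hτ0' with h0 | h0
      · exfalso
        have hxz0 : x - z = 0 := by rw [hzx', ← h0, zero_smul]
        exact hdisj z hzF ((sub_eq_zero.1 hxz0) ▸ hx)
      · exact h0
    have hτ1 : τ ≤ 1 := by linarith
    have hyz' : y - z = (aa + τ*r) • u + (b' - τ*s) • e₂ := by
      have hrw : y - z = (y - x) + (x - z) := by abel
      rw [hrw, hyx, hzx']; module
    have hxz2 : x - z = (τ*r) • u + (-(τ*s)) • e₂ := by rw [hzx']; module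
    have hnxz : ‖x - z‖^2 = (τ*r)^2 + (τ*s)^2 := by
      rw [hxz2, aux_comb_norm_sq hu1 he₂ hue₂]; ring
    have hnyz : ‖y - z‖^2 = (aa+τ*r)^2 + (b'-τ*s)^2 := by
      rw [hyz', aux_comb_norm_sq hu1 he₂ hue₂]
    have hixy : ⟪x - z, y - z⟫_ℝ = (τ*r)*(aa+τ*r) + (-(τ*s))*(b'-τ*s) := by
      rw [hxz2, hyz', aux_comb_inner hu1 he₂ hue₂]
    have hnxzpos : 0 < ‖x - z‖ := by
      have h2 : (0:ℝ)^2 < ‖x - z‖^2 := by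
        rw [hnxz]; simpa using (by positivity : (0:ℝ) < (τ*r)^2+(τ*s)^2)
      exact lt_of_pow_lt_pow_left₀ 2 (norm_nonneg _) h2
    have hnyzpos : 0 < ‖y - z‖ := by
      have ha1 : 0 < aa + τ*r := add_pos_of_nonneg_of_pos haa0 (mul_pos hτpos hr)
      have h2 : (0:ℝ)^2 < ‖y - z‖^2 := by
        rw [hnyz]
        simpa using add_pos_of_pos_of_nonneg (pow_pos ha1 2) (sq_nonneg (b'-τ*s))
      exact lt_of_pow_lt_pow_left₀ 2 (norm_nonneg _) h2
    have hangle : EuclideanGeometry.angle x z y = InnerProductGeometry.angle (x - z) (y - z) := rfl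
    set θ₀ := Real.arcsin (c/(c+2*r)) with hθ₀
    have hcpos : 0 < c + 2*r := by linarith
    have hgoal : θ₀ ≤ EuclideanGeometry.angle x z y := by
      have hfrac0 : 0 ≤ c/(c+2*r) := by positivity
      have hθ₀0 : 0 ≤ θ₀ := Real.arcsin_nonneg.2 hfrac0
      have hθ₀π : θ₀ ≤ π := (Real.arcsin_le_pi_div_two _).trans (by linarith [Real.pi_pos])
      have hcosθ₀ : Real.cos θ₀ = 2*s/(c+2*r) := by
        rw [hθ₀, Real.cos_arcsin]
        have he : 1 - (c/(c+2*r))^2 = (2*s/(c+2*r))^2 := by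
          field_simp
          linear_combination -4*hs2
        rw [he, Real.sqrt_sq (by positivity)]
      have hcosang : Real.cos (EuclideanGeometry.angle x z y) ≤ 2*s/(c+2*r) := by
        rw [hangle, InnerProductGeometry.cos_angle,
          div_le_iff₀ (by positivity : 0 < ‖x-z‖*‖y-z‖), hixy]
        rcases le_or_gt (r*(aa+τ*r) - s*(b'-τ*s)) 0 with hL | hL
        · have hprod := mul_nonpos_of_nonneg_of_nonpos hτpos.le hL
          have hrhs : 0 ≤ 2*s/(c+2*r) * (‖x-z‖*‖y-z‖) := by positivity
          have hIval0 : (τ*r)*(aa+τ*r) + (-(τ*s))*(b'-τ*s)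
              = τ*(r*(aa+τ*r) - s*(b'-τ*s)) := by ring
          rw [hIval0]
          exact hprod.trans hrhs
        · have hcore := aux_lower_core r c s aa b' τ hr hc hs0.le hs2 haa0 hb'0 habc hτpos hτ1 hL.le
          have hIval : (τ*r)*(aa+τ*r) + (-(τ*s))*(b'-τ*s) = τ*(r*(aa+τ*r) - s*(b'-τ*s)) := by
            ring
          rw [hIval]
          have hrhs0 : 0 ≤ 2*s/(c+2*r) * (‖x-z‖*‖y-z‖) := by positivity
          have hlhs0 : 0 ≤ τ*(r*(aa+τ*r) - s*(b'-τ*s)) := mul_nonneg hτpos.le hL.le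
          have hsq2 : (τ*(r*(aa+τ*r) - s*(b'-τ*s)))^2
              ≤ (2*s/(c+2*r) * (‖x-z‖*‖y-z‖))^2 := by
            have hnn : (2*s/(c+2*r) * (‖x-z‖*‖y-z‖))^2
                = (2*s)^2/(c+2*r)^2 * (‖x-z‖^2*‖y-z‖^2) := by
              field_simp
            rw [hnn, hnxz, hnyz, div_mul_eq_mul_div, le_div_iff₀ (by positivity : (0:ℝ) < (c+2*r)^2)]
            linarith [mul_le_mul_of_nonneg_left hcore (sq_nonneg τ)]
          exact le_of_pow_le_pow_left₀ two_ne_zero hrhs0 hsq2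
      rw [← hcosθ₀] at hcosang
      exact aux_angle_le_of_cos_le hθ₀0 hθ₀π (EuclideanGeometry.angle_nonneg _ _ _)
        (EuclideanGeometry.angle_le_pi _ _ _) hcosang
    exact hgoal.trans (le_csSup hbdd ⟨z, hzF, rfl⟩)
  · -- upper bound
    have h4c : (0:ℝ) < 4*r^2 + c^2 := by positivity
    set w := c / Real.sqrt (4*r^2+c^2) with hwdef
    have hsq : Real.sqrt (4*r^2+c^2)^2 = 4*r^2+c^2 := Real.sq_sqrt h4c.le
    have hsqpos : 0 < Real.sqrt (4*r^2+c^2) := Real.sqrt_pos.2 h4c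
    have hw0 : 0 ≤ w := by positivity
    have hw1 : w ≤ 1 := by
      rw [hwdef, div_le_one hsqpos]
      nlinarith [hsq, hsqpos, Real.sqrt_nonneg (4*r^2+c^2)]
    have hw2 : w^2 = c^2/(4*r^2+c^2) := by rw [hwdef, div_pow, hsq]
    have hB0 : 0 ≤ 2*Real.arcsin w := by
      have := Real.arcsin_nonneg.2 hw0; linarith
    have hBpi : 2*Real.arcsin w ≤ π := by
      have := Real.arcsin_le_pi_div_two w; linarith
    have hcosB : Real.cos (2*Real.arcsin w) = 1 - 2*w^2 := by
      rw [Real.cos_two_mul, Real.cos_arcsin, Real.sq_sqrt (by nlinarith : (0:ℝ) ≤ 1 - w^2)]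
      ring
    show sSup _ ≤ _
    apply Real.sSup_le _ hB0
    rintro _ ⟨z, hzF, rfl⟩
    show EuclideanGeometry.angle x z y ≤ 2*Real.arcsin w
    set u := dist x z with hudef
    set v := dist y z with hvdef
    have hu : r ≤ u := hzx z hzF
    have hv : r ≤ v := hzy z hzF
    have hupos : 0 < u := hr.trans_le hu
    have hvpos : 0 < v := hr.trans_le hv
    have hlaw := EuclideanGeometry.law_cos x z y
    have hnzx : ‖z-x‖ = u := by rw [← dist_eq_norm, dist_comm]
    have hnzy : ‖z-y‖ = v := by rw [← dist_eq_norm, dist_comm]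
    have hcap : ∀ μ : ℝ, 0 ≤ μ → μ ≤ 1 → r ≤ dist z (x + μ • (y - x)) := by
      intro μ h0 h1
      by_contra hlt
      push_neg at hlt
      refine hdisj z hzF ?_
      set δ := z - (x + μ • (y - x)) with hδ
      have hδn : ‖δ‖ < r := by rw [hδ, ← dist_eq_norm]; exact hlt
      have hx' : x + δ ∈ G := by
        refine aux_mem_of_dist_lt_infDist hx ?_
        have he : dist x (x+δ) = ‖δ‖ := by
          rw [dist_eq_norm]; simp
        rw [he, ← hFdef, ← hrdef]; exact hδn
      have hy' : y + δ ∈ G := by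
        refine aux_mem_of_dist_lt_infDist hy ?_
        have he : dist y (y+δ) = ‖δ‖ := by
          rw [dist_eq_norm]; simp
        rw [he, ← hFdef]
        exact hδn.trans_le hle
      have hzeq : z = (1-μ) • (x+δ) + μ • (y+δ) := by rw [hδ]; module
      rw [hzeq]
      exact hconv hx' hy' (by linarith) h0 (by ring)
    have hinner : 2*⟪z - x, z - y⟫_ℝ = u^2 + v^2 - c^2 := by
      have hns := @norm_sub_sq_real (EuclideanSpace ℝ (Fin n)) _ _ (z-x) (z-y)
      have h1 : (z-x)-(z-y) = y - x := by abel
      have h2 : ‖y - x‖ = c := by rw [← dist_eq_norm, dist_comm]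
      rw [h1, h2, hnzx, hnzy] at hns
      linarith
    have hseg : ∀ μ : ℝ, 0 ≤ μ → μ ≤ 1 → r^2 ≤ (1-μ)*u^2 + μ*v^2 - μ*(1-μ)*c^2 := by
      intro μ h0 h1
      have hd := hcap μ h0 h1
      have hd2 : r^2 ≤ dist z (x + μ • (y-x))^2 := pow_le_pow_left₀ hr.le hd 2
      have hzp : z - (x + μ • (y-x)) = (1-μ) • (z-x) + μ • (z-y) := by module
      have hnorm : dist z (x + μ • (y-x))^2
          = ((1-μ)*u)^2 + 2*((1-μ)*(μ*⟪z-x,z-y⟫_ℝ)) + (μ*v)^2 := by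
        rw [dist_eq_norm, hzp, norm_add_sq_real, real_inner_smul_left, real_inner_smul_right,
          norm_smul, norm_smul, Real.norm_eq_abs, Real.norm_eq_abs,
          abs_of_nonneg (by linarith : (0:ℝ) ≤ 1-μ), abs_of_nonneg h0, hnzx, hnzy]
      have hId : ((1-μ)*u)^2 + 2*((1-μ)*(μ*⟪z-x,z-y⟫_ℝ)) + (μ*v)^2
          = (1-μ)*u^2 + μ*v^2 - μ*(1-μ)*c^2 := by
        linear_combination ((1-μ)*μ) * hinner
      rw [hnorm, hId] at hd2
      exact hd2
    have htri1 : v ≤ c + u := by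
      have := dist_triangle y x z
      rw [dist_comm y x] at this
      exact this
    have htri2 : u ≤ c + v := dist_triangle x y z
    have htri3 : c ≤ u + v := by
      have := dist_triangle x z y
      rw [dist_comm z y] at this
      exact this
    have hpoly : (4*r^2 - c^2)*(2*u*v) ≤ (u^2+v^2-c^2)*(4*r^2+c^2) := by
      rcases le_or_gt (c^2 + u^2) (v^2) with hA | hA
      · have := aux_caseA r c u v hr hc hu hvpos.le hA (by linarith)
        linarith [this]
      · rcases le_or_gt (c^2 + v^2) (u^2) with hB | hB
        · have := aux_caseA r c v u hr hc hv hupos.le hB (by linarith)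
          linarith [this]
        · set μ := (c^2 + u^2 - v^2)/(2*c^2) with hμ
          have hμ0 : 0 ≤ μ := div_nonneg (by linarith) (by positivity)
          have hμ1 : μ ≤ 1 := by
            rw [hμ, div_le_one (by positivity)]; linarith
          have hE := hseg μ hμ0 hμ1
          have hid : 4*c^2*((1-μ)*u^2 + μ*v^2 - μ*(1-μ)*c^2)
              = (c^2-(u-v)^2)*((u+v)^2-c^2) := by
            rw [hμ]; field_simp; ring
          have hh : 4*c^2*r^2 ≤ (c^2-(u-v)^2)*((u+v)^2-c^2) := by
            have := mul_le_mul_of_nonneg_left hE (by positivity : (0:ℝ) ≤ 4*c^2)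
            rw [hid] at this
            linarith
          have := aux_caseC r c u v hr hc htri3 hh
          linarith [this]
    have h2uv : 0 < 2*u*v := by positivity
    have hcosval : Real.cos (EuclideanGeometry.angle x z y) = (u^2+v^2-c^2)/(2*u*v) := by
      rw [eq_div_iff (by positivity : (2:ℝ)*u*v ≠ 0)]
      linarith [hlaw]
    have hcos : 1 - 2*w^2 ≤ Real.cos (EuclideanGeometry.angle x z y) := by
      rw [hcosval, hw2, le_div_iff₀ h2uv]
      have he : (1 - 2*(c^2/(4*r^2+c^2)))*(2*u*v) = ((4*r^2-c^2)*(2*u*v))/(4*r^2+c^2) := by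
        field_simp; ring
      rw [he, div_le_iff₀ h4c]
      linarith [hpoly]
    refine aux_angle_le_of_cos_le (EuclideanGeometry.angle_nonneg _ _ _)
      (EuclideanGeometry.angle_le_pi _ _ _) hB0 hBpi ?_
    rw [hcosB]
    exact hcos

lemma aux_visualAngle_comm {n : ℕ} (G : Set (EuclideanSpace ℝ (Fin n)))
    (x y : EuclideanSpace ℝ (Fin n)) : visualAngle G x y = visualAngle G y x := by
  unfold visualAngle
  have h : (fun z => EuclideanGeometry.angle x z y) = (fun z => EuclideanGeometry.angle y z x) :=
    funext fun z => EuclideanGeometry.angle_comm x z y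
  rw [h]

/-- On a proper convex subdomain, with `t = e^{j_G(x,y)} − 1`,
`arcsin(t/(t+2)) ≤ v_G(x,y) ≤ 2 arcsin(t/√(4+t²))`. -/
theorem visualAngle_le_of_convex {n : ℕ} (hn : 2 ≤ n)
    (G : Set (EuclideanSpace ℝ (Fin n)))
    (hopen : IsOpen G) (hconv : Convex ℝ G) (hne : G.Nonempty) (hproper : G ≠ univ)
    (x y : EuclideanSpace ℝ (Fin n)) (hx : x ∈ G) (hy : y ∈ G)
    (t : ℝ) (ht : t = Real.exp (jMetric G x y) - 1) :
    Real.arcsin (t / (t + 2)) ≤ visualAngle G x y ∧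
    visualAngle G x y ≤ 2 * Real.arcsin (t / Real.sqrt (4 + t ^ 2)) := by
  haveI : PreconnectedSpace (EuclideanSpace ℝ (Fin n)) := ⟨convex_univ.isPreconnected⟩
  have hFne : (frontier G).Nonempty := nonempty_frontier_iff.2 ⟨hne, hproper⟩
  have hdisj : ∀ w ∈ frontier G, w ∉ G := by
    intro w hw hwG
    have hmem : w ∈ G ∩ frontier G := ⟨hwG, hw⟩
    rw [hopen.inter_frontier_eq] at hmem
    exact hmem
  have hdx : 0 < infDist x (frontier G) :=
    (isClosed_frontier.notMem_iff_infDist_pos hFne).1 (fun h => hdisj x h hx)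
  have hdy : 0 < infDist y (frontier G) :=
    (isClosed_frontier.notMem_iff_infDist_pos hFne).1 (fun h => hdisj y h hy)
  have hm : 0 < min (infDist x (frontier G)) (infDist y (frontier G)) := lt_min hdx hdy
  have hquot : 0 ≤ dist x y / min (infDist x (frontier G)) (infDist y (frontier G)) := by
    positivity
  have htv : t = dist x y / min (infDist x (frontier G)) (infDist y (frontier G)) := by
    rw [ht]
    unfold jMetric
    rw [Real.exp_log (by linarith)]
    ring
  by_cases hxy : x = y
  · subst hxy
    have ht0 : t = 0 := by rw [htv, dist_self, zero_div]
    rw [ht0]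
    norm_num
    constructor
    · exact Real.sSup_nonneg (by rintro _ ⟨w, hw, rfl⟩; exact EuclideanGeometry.angle_nonneg _ _ _)
    · refine Real.sSup_le ?_ le_rfl
      rintro _ ⟨w, hw, rfl⟩
      have hwx : x - w ≠ 0 := sub_ne_zero.2 (fun h => hdisj w hw (h ▸ hx))
      have h0 : EuclideanGeometry.angle x w x = InnerProductGeometry.angle (x - w) (x - w) := rfl
      show EuclideanGeometry.angle x w x ≤ 0
      rw [h0, InnerProductGeometry.angle_self hwx]
  · have hc : 0 < dist x y := dist_pos.2 hxy
    rcases le_total (infDist x (frontier G)) (infDist y (frontier G)) with hle | hle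
    · have hkey := aux_key hn hopen hconv hne hproper hx hy hxy hle
      have hmeq : min (infDist x (frontier G)) (infDist y (frontier G))
          = infDist x (frontier G) := min_eq_left hle
      rw [hmeq] at htv
      set d := infDist x (frontier G) with hd
      set c := dist x y with hc'
      have e1 : t/(t+2) = c/(c + 2*d) := by
        rw [htv]
        have hdne : d ≠ 0 := hdx.ne'
        field_simp
      have hsq : Real.sqrt (4*d^2+c^2) > 0 := Real.sqrt_pos.2 (by positivity)
      have e2 : t/Real.sqrt (4+t^2) = c/Real.sqrt (4*d^2+c^2) := by
        rw [htv]
        have h3 : (4:ℝ) + (c/d)^2 = (4*d^2+c^2)/d^2 := by field_simp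
        rw [h3, Real.sqrt_div' _ (by positivity), Real.sqrt_sq hdx.le]
        have hdne : d ≠ 0 := hdx.ne'
        have hsne : Real.sqrt (4*d^2+c^2) ≠ 0 := hsq.ne'
        field_simp
      rw [e1, e2]
      exact hkey
    · have hkey := aux_key hn hopen hconv hne hproper hy hx (Ne.symm hxy) hle
      have hmeq : min (infDist x (frontier G)) (infDist y (frontier G))
          = infDist y (frontier G) := min_eq_right hle
      rw [hmeq, dist_comm x y] at htv
      rw [aux_visualAngle_comm G x y]
      set d := infDist y (frontier G) with hd
      set c := dist y x with hc'
      have hc2 : 0 < c := by rw [hc', dist_comm]; exact hc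
      have e1 : t/(t+2) = c/(c + 2*d) := by
        rw [htv]
        have hdne : d ≠ 0 := hdy.ne'
        field_simp
      have e2 : t/Real.sqrt (4+t^2) = c/Real.sqrt (4*d^2+c^2) := by
        rw [htv]
        have h3 : (4:ℝ) + (c/d)^2 = (4*d^2+c^2)/d^2 := by field_simp
        rw [h3, Real.sqrt_div' _ (by positivity), Real.sqrt_sq hdy.le]
        have hdne : d ≠ 0 := hdy.ne'
        have hsne : Real.sqrt (4*d^2+c^2) ≠ 0 :=
          (Real.sqrt_pos.2 (by positivity)).ne'
        field_simp
      rw [e1, e2]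
      exact hkey
end

section
/- Let G be a proper convex subdomain of ℝⁿ. Then for all x, y ∈ G, v_G(x,y) ≤ (π/log 4) · k_G(x,y), where k_G is the quasihyperbolic metric. -/
open Real Set Metric intervalIntegral RealInnerProductSpace

variable {E : Type*} [NormedAddCommGroup E] [InnerProductSpace ℝ E]

lemma unit_angle_le {E : Type*} [NormedAddCommGroup E] [InnerProductSpace ℝ E] {u w : E} (hu : ‖u‖ = 1) (hw : ‖w‖ = 1) :
    InnerProductGeometry.angle u w ≤ π / 2 * ‖u - w‖ := by
  set θ := InnerProductGeometry.angle u w with hθ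
  have hθ0 : 0 ≤ θ := InnerProductGeometry.angle_nonneg u w
  have hθπ : θ ≤ π := InnerProductGeometry.angle_le_pi u w
  have hcos : Real.cos θ = ⟪u, w⟫ := by
    rw [hθ, InnerProductGeometry.cos_angle, hu, hw]; simp
  have hns : ‖u - w‖ ^ 2 = 2 - 2 * Real.cos θ := by
    rw [norm_sub_sq_real, hu, hw, hcos]; ring
  have hsin : 0 ≤ Real.sin (θ / 2) :=
    Real.sin_nonneg_of_nonneg_of_le_pi (by linarith) (by linarith [Real.pi_pos])
  have hkey : ‖u - w‖ = 2 * Real.sin (θ / 2) := by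
    have h2 : (2 * Real.sin (θ / 2)) ^ 2 = 2 - 2 * Real.cos θ := by
      have := Real.sin_sq_eq_half_sub (θ / 2)
      rw [show 2 * (θ / 2) = θ by ring] at this
      nlinarith
    have h3 : ‖u - w‖ ^ 2 = (2 * Real.sin (θ / 2)) ^ 2 := by rw [hns, h2]
    have := Real.sqrt_sq (norm_nonneg (u - w))
    rw [← this, h3, Real.sqrt_sq (by linarith)]
  have hj : 2 / π * (θ / 2) ≤ Real.sin (θ / 2) :=
    Real.mul_le_sin (by linarith) (by linarith)
  have hπ : 0 < π := Real.pi_pos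
  rw [hkey]
  rw [div_mul_eq_mul_div, mul_comm] at hj
  calc θ = π * (θ / π) := by field_simp
  _ ≤ π * Real.sin (θ / 2) := by
      apply mul_le_mul_of_nonneg_left _ hπ.le
      calc θ / π = θ / 2 * 2 / π := by ring
      _ ≤ _ := hj
  _ = π / 2 * (2 * Real.sin (θ / 2)) := by ring


lemma curve_angle_le {E : Type*} [NormedAddCommGroup E] [InnerProductSpace ℝ E] [CompleteSpace E] (γ : ℝ → E) (z : E) (hγ : ContDiffOn ℝ 1 γ (Icc 0 1))
    (hz : ∀ t ∈ Icc (0:ℝ) 1, γ t ≠ z) :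
    InnerProductGeometry.angle (γ 0 - z) (γ 1 - z) ≤
      π / 2 * ∫ t in (0:ℝ)..1, ‖derivWithin γ (Icc 0 1) t‖ / ‖γ t - z‖ := by
  set v : ℝ → E := fun t => γ t - z with hv
  set w : ℝ → E := derivWithin γ (Icc 0 1) with hw
  set N : ℝ → ℝ := fun t => ‖v t‖ with hN
  set σ : ℝ → E := fun t => (N t)⁻¹ • v t with hσ
  set F : ℝ → E := fun t => (N t)⁻¹ • w t + (-(⟪v t, w t⟫ / N t) / N t ^ 2) • v t with hF
  have h01 : (0:ℝ) ≤ 1 := zero_le_one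
  have hIcc : uIcc (0:ℝ) 1 = Icc 0 1 := uIcc_of_le h01
  have hvcont : ContinuousOn v (Icc 0 1) := hγ.continuousOn.sub continuousOn_const
  have hwcont : ContinuousOn w (Icc 0 1) :=
    hγ.continuousOn_derivWithin (uniqueDiffOn_Icc one_pos) le_rfl
  have hNpos : ∀ t ∈ Icc (0:ℝ) 1, 0 < N t := fun t ht =>
    norm_pos_iff.mpr (sub_ne_zero.mpr (hz t ht))
  have hNne : ∀ t ∈ Icc (0:ℝ) 1, N t ≠ 0 := fun t ht => (hNpos t ht).ne'
  have hNcont : ContinuousOn N (Icc 0 1) := hvcont.norm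
  have hNicont : ContinuousOn (fun t => (N t)⁻¹) (Icc 0 1) := hNcont.inv₀ hNne
  have hσcont : ContinuousOn σ (Icc 0 1) := hNicont.smul hvcont
  have hFcont : ContinuousOn F (Icc 0 1) := by
    apply (hNicont.smul hwcont).add
    exact ((((hvcont.inner hwcont).div hNcont hNne).neg.div (hNcont.pow 2)
      (fun t ht => pow_ne_zero _ (hNne t ht))).smul hvcont)
  have hderiv : ∀ t ∈ Ioo (0:ℝ) 1, HasDerivAt σ (F t) t := by
    intro t ht
    have htI : t ∈ Icc (0:ℝ) 1 := Ioo_subset_Icc_self ht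
    have htn : Icc (0:ℝ) 1 ∈ nhds t := Icc_mem_nhds ht.1 ht.2
    have hd : DifferentiableAt ℝ γ t :=
      ((hγ t htI).differentiableWithinAt one_ne_zero).differentiableAt htn
    have hγt : HasDerivAt γ (w t) t := by
      have := hd.hasDerivAt
      rwa [← derivWithin_of_mem_nhds htn] at this
    have hvt : HasDerivAt v (w t) t := hγt.sub_const z
    have hq : (⟪v t, v t⟫ : ℝ) ≠ 0 := by
      rw [real_inner_self_eq_norm_sq]
      exact pow_ne_zero _ (hNne t htI)
    have hinner : HasDerivAt (fun s => (⟪v s, v s⟫ : ℝ)) (⟪v t, w t⟫ + ⟪w t, v t⟫) t :=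
      hvt.inner ℝ hvt
    have hs := (Real.hasDerivAt_sqrt hq).comp t hinner
    have hfun : (fun s => Real.sqrt (⟪v s, v s⟫ : ℝ)) = N := by
      funext s
      rw [real_inner_self_eq_norm_sq, Real.sqrt_sq (norm_nonneg _)]
    have hNt : HasDerivAt N (⟪v t, w t⟫ / N t) t := by
      rw [← hfun]
      have hvv : Real.sqrt (⟪v t, v t⟫ : ℝ) = N t := by
        rw [real_inner_self_eq_norm_sq]; exact Real.sqrt_sq (norm_nonneg _)
      refine (HasDerivAt.congr_deriv hs ?_ : _)
      symm
      rw [hvv, real_inner_comm (w t) (v t)]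
      have hne : N t ≠ 0 := hNne t htI
      field_simp
      rw [hvv]
      field_simp
      ring
    have hNit : HasDerivAt (fun s => (N s)⁻¹) (-(⟪v t, w t⟫ / N t) / N t ^ 2) t :=
      hNt.inv (hNne t htI)
    exact hNit.smul hvt
  have hFint : IntervalIntegrable F MeasureTheory.volume 0 1 :=
    (hFcont.mono (by rw [hIcc])).intervalIntegrable
  have hftc : ∫ t in (0:ℝ)..1, F t = σ 1 - σ 0 :=
    intervalIntegral.integral_eq_sub_of_hasDerivAt_of_le h01 hσcont hderiv hFint
  have hFle : ∀ t ∈ Icc (0:ℝ) 1, ‖F t‖ ≤ ‖w t‖ / ‖v t‖ := by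
    intro t ht
    have ha : 0 < N t := hNpos t ht
    have hsq : ‖F t‖ ^ 2 = ‖w t‖ ^ 2 / N t ^ 2 - (⟪v t, w t⟫ : ℝ) ^ 2 / N t ^ 4 := by
      rw [hF]
      rw [norm_add_sq_real, norm_smul, norm_smul, inner_smul_left, inner_smul_right]
      simp only [RCLike.star_def, conj_trivial, Real.norm_eq_abs, norm_inv]
      rw [real_inner_comm (w t) (v t)]
      have hNv : ‖v t‖ = N t := rfl
      rw [hNv, abs_of_pos ha]
      simp only [mul_pow, sq_abs]
      have hne : N t ≠ 0 := ha.ne'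
      field_simp
      ring
    have h2 : ‖F t‖ ^ 2 ≤ (‖w t‖ / ‖v t‖) ^ 2 := by
      rw [hsq, div_pow]
      have : 0 ≤ (⟪v t, w t⟫ : ℝ) ^ 2 / N t ^ 4 := by positivity
      have hNv : ‖v t‖ = N t := rfl
      rw [hNv]
      linarith
    calc ‖F t‖ = Real.sqrt (‖F t‖ ^ 2) := (Real.sqrt_sq (norm_nonneg _)).symm
    _ ≤ Real.sqrt ((‖w t‖ / ‖v t‖) ^ 2) := Real.sqrt_le_sqrt h2
    _ = ‖w t‖ / ‖v t‖ := Real.sqrt_sq (by positivity)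
  have hgint : IntervalIntegrable (fun t => ‖w t‖ / ‖v t‖) MeasureTheory.volume 0 1 := by
    apply ContinuousOn.intervalIntegrable
    rw [hIcc]
    exact hwcont.norm.div hvcont.norm (fun t ht => (hNpos t ht).ne')
  have hnorm : ‖σ 1 - σ 0‖ ≤ ∫ t in (0:ℝ)..1, ‖w t‖ / ‖v t‖ := by
    rw [← hftc]
    refine (intervalIntegral.norm_integral_le_integral_norm h01).trans ?_
    exact intervalIntegral.integral_mono_on h01 (hFint.norm)
      hgint hFle
  have hunit : ∀ t ∈ Icc (0:ℝ) 1, ‖σ t‖ = 1 := by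
    intro t ht
    rw [hσ]
    simp only [norm_smul, norm_inv, Real.norm_eq_abs, abs_of_pos (hNpos t ht)]
    exact inv_mul_cancel₀ (hNne t ht)
  have h0I : (0:ℝ) ∈ Icc (0:ℝ) 1 := ⟨le_rfl, h01⟩
  have h1I : (1:ℝ) ∈ Icc (0:ℝ) 1 := ⟨h01, le_rfl⟩
  have hangle : InnerProductGeometry.angle (γ 0 - z) (γ 1 - z) =
      InnerProductGeometry.angle (σ 0) (σ 1) := by
    rw [hσ]
    rw [InnerProductGeometry.angle_smul_left_of_pos _ _ (inv_pos.mpr (hNpos 0 h0I)),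
      InnerProductGeometry.angle_smul_right_of_pos _ _ (inv_pos.mpr (hNpos 1 h1I))]
  rw [hangle]
  calc InnerProductGeometry.angle (σ 0) (σ 1) ≤ π / 2 * ‖σ 0 - σ 1‖ :=
        unit_angle_le (hunit 0 h0I) (hunit 1 h1I)
  _ = π / 2 * ‖σ 1 - σ 0‖ := by rw [norm_sub_rev]
  _ ≤ π / 2 * ∫ t in (0:ℝ)..1, ‖w t‖ / ‖v t‖ :=
      mul_le_mul_of_nonneg_left hnorm (by positivity)


/-- The quasihyperbolic metric: infimum over smooth paths `γ` in `G` joining `x` to `y`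
of `∫ ‖γ'(t)‖ / dist(γ(t), ∂G) dt`. -/
noncomputable def quasiHyp {n : ℕ} (G : Set (EuclideanSpace ℝ (Fin n)))
    (x y : EuclideanSpace ℝ (Fin n)) : ℝ :=
  sInf {l | ∃ γ : ℝ → EuclideanSpace ℝ (Fin n), γ 0 = x ∧ γ 1 = y ∧
    (∀ t ∈ Icc (0:ℝ) 1, γ t ∈ G) ∧ ContDiffOn ℝ 1 γ (Icc (0:ℝ) 1) ∧
    l = ∫ t in (0:ℝ)..1, ‖deriv γ t‖ / infDist (γ t) (frontier G)}

/-- On a proper convex subdomain, `v_G(x,y) ≤ (π / log 4) k_G(x,y)`. -/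
theorem visualAngle_le_quasiHyp {n : ℕ} (hn : 2 ≤ n)
    (G : Set (EuclideanSpace ℝ (Fin n)))
    (hopen : IsOpen G) (hconv : Convex ℝ G) (hne : G.Nonempty) (hproper : G ≠ univ)
    (x y : EuclideanSpace ℝ (Fin n)) (hx : x ∈ G) (hy : y ∈ G) :
    visualAngle G x y ≤ π / Real.log 4 * quasiHyp G x y := by
  have h01 : (0:ℝ) ≤ 1 := zero_le_one
  haveI : PreconnectedSpace (EuclideanSpace ℝ (Fin n)) :=
    ⟨(convex_univ : Convex ℝ (univ : Set (EuclideanSpace ℝ (Fin n)))).isPreconnected⟩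
  have hfr : (frontier G).Nonempty := nonempty_frontier_iff.mpr ⟨hne, hproper⟩
  set c := π / Real.log 4 with hc
  have hlog : 0 < Real.log 4 := Real.log_pos (by norm_num)
  have hcpos : 0 < c := div_pos Real.pi_pos hlog
  have hc2 : π / 2 ≤ c := by
    apply div_le_div_of_nonneg_left Real.pi_pos.le hlog
    have h42 : (4:ℝ) = 2 ^ 2 := by norm_num
    rw [h42, Real.log_pow]
    push_cast
    nlinarith [Real.log_two_lt_d9]
  set S := {l | ∃ γ : ℝ → EuclideanSpace ℝ (Fin n), γ 0 = x ∧ γ 1 = y ∧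
    (∀ t ∈ Icc (0:ℝ) 1, γ t ∈ G) ∧ ContDiffOn ℝ 1 γ (Icc (0:ℝ) 1) ∧
    l = ∫ t in (0:ℝ)..1, ‖deriv γ t‖ / infDist (γ t) (frontier G)} with hS
  have hSne : S.Nonempty := by
    refine ⟨_, fun t => x + t • (y - x), by simp, by simp, ?_, ?_, rfl⟩
    · intro t ht
      show x + t • (y - x) ∈ G
      have heq : x + t • (y - x) = (1 - t) • x + t • y := by
        rw [smul_sub, sub_smul, one_smul]; abel
      rw [heq]
      exact hconv hx hy (by linarith [ht.2]) ht.1 (by ring)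
    · exact (contDiff_const.add (contDiff_id.smul contDiff_const)).contDiffOn
  have key : ∀ l ∈ S, visualAngle G x y ≤ c * l := by
    rintro l ⟨γ, hγ0, hγ1, hγG, hγC1, hl⟩
    set g₂ : ℝ → ℝ := fun t => ‖derivWithin γ (Icc 0 1) t‖ / infDist (γ t) (frontier G) with hg₂
    have hwcont : ContinuousOn (derivWithin γ (Icc 0 1)) (Icc 0 1) :=
      hγC1.continuousOn_derivWithin (uniqueDiffOn_Icc one_pos) le_rfl
    have hγcont : ContinuousOn γ (Icc 0 1) := hγC1.continuousOn
    have hinfpos : ∀ t ∈ Icc (0:ℝ) 1, 0 < infDist (γ t) (frontier G) := by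
      intro t ht
      refine (isClosed_frontier.notMem_iff_infDist_pos hfr).mp ?_
      intro hmem
      rw [hopen.frontier_eq] at hmem
      exact hmem.2 (hγG t ht)
    have hg₂cont : ContinuousOn g₂ (Icc 0 1) :=
      hwcont.norm.div ((continuous_infDist_pt (frontier G)).comp_continuousOn hγcont)
        (fun t ht => (hinfpos t ht).ne')
    have hg₂int : IntervalIntegrable g₂ MeasureTheory.volume 0 1 :=
      (hg₂cont.mono (by rw [uIcc_of_le h01])).intervalIntegrable
    have hleq : l = ∫ t in (0:ℝ)..1, g₂ t := by
      rw [hl]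
      apply intervalIntegral.integral_congr_ae
      have hae : ∀ᵐ (t:ℝ) ∂MeasureTheory.volume, t ≠ 1 := by
        have hone : {a : ℝ | ¬ a ≠ 1} = {1} := by ext a; simp
        rw [MeasureTheory.ae_iff, hone]
        exact Real.volume_singleton
      filter_upwards [hae] with t ht1 htI
      rw [Set.uIoc_of_le h01] at htI
      have hto : t ∈ Ioo (0:ℝ) 1 := ⟨htI.1, lt_of_le_of_ne htI.2 ht1⟩
      simp only [hg₂]
      rw [derivWithin_of_mem_nhds (Icc_mem_nhds hto.1 hto.2)]
    have hintnonneg : 0 ≤ ∫ t in (0:ℝ)..1, g₂ t := by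
      apply intervalIntegral.integral_nonneg h01
      intro t ht
      exact div_nonneg (norm_nonneg _) infDist_nonneg
    have hbound : ∀ z ∈ frontier G, EuclideanGeometry.angle x z y ≤ c * l := by
      intro z hzf
      have hzG : z ∉ G := by
        rw [hopen.frontier_eq] at hzf
        exact hzf.2
      have hne' : ∀ t ∈ Icc (0:ℝ) 1, γ t ≠ z := fun t ht h => hzG (h ▸ hγG t ht)
      have h1 := curve_angle_le γ z hγC1 hne'
      have hangle : EuclideanGeometry.angle x z y =
          InnerProductGeometry.angle (γ 0 - z) (γ 1 - z) := by
        rw [hγ0, hγ1, EuclideanGeometry.angle, vsub_eq_sub, vsub_eq_sub]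
      have hg₁int : IntervalIntegrable
          (fun t => ‖derivWithin γ (Icc 0 1) t‖ / ‖γ t - z‖) MeasureTheory.volume 0 1 := by
        apply ContinuousOn.intervalIntegrable
        rw [uIcc_of_le h01]
        exact hwcont.norm.div (hγcont.sub continuousOn_const).norm
          (fun t ht => norm_ne_zero_iff.mpr (sub_ne_zero.mpr (hne' t ht)))
      have hmono : (∫ t in (0:ℝ)..1, ‖derivWithin γ (Icc 0 1) t‖ / ‖γ t - z‖)
          ≤ ∫ t in (0:ℝ)..1, g₂ t := by
        apply intervalIntegral.integral_mono_on h01 hg₁int hg₂int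
        intro t ht
        have hle : infDist (γ t) (frontier G) ≤ ‖γ t - z‖ := by
          rw [← dist_eq_norm]
          exact infDist_le_dist_of_mem hzf
        have hpos := hinfpos t ht
        simp only [hg₂]
        gcongr
      calc EuclideanGeometry.angle x z y
          = InnerProductGeometry.angle (γ 0 - z) (γ 1 - z) := hangle
        _ ≤ π / 2 * ∫ t in (0:ℝ)..1, ‖derivWithin γ (Icc 0 1) t‖ / ‖γ t - z‖ := h1
        _ ≤ π / 2 * ∫ t in (0:ℝ)..1, g₂ t :=
            mul_le_mul_of_nonneg_left hmono (by positivity)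
        _ ≤ c * ∫ t in (0:ℝ)..1, g₂ t :=
            mul_le_mul_of_nonneg_right hc2 hintnonneg
        _ = c * l := by rw [hleq]
    refine csSup_le (hfr.image _) ?_
    rintro a ⟨z, hzf, rfl⟩
    exact hbound z hzf
  have hdiv : visualAngle G x y / c ≤ quasiHyp G x y := by
    apply le_csInf hSne
    intro l hl
    rw [div_le_iff₀ hcpos]
    rw [mul_comm]
    exact key l hl
  calc visualAngle G x y = visualAngle G x y / c * c := by field_simp
    _ ≤ quasiHyp G x y * c := mul_le_mul_of_nonneg_right hdiv hcpos.le
    _ = c * quasiHyp G x y := mul_comm _ _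
end

section
/- Let G₁, G₂ be proper convex subdomains of ℝⁿ and f : G₁ → G₂ = f(G₁) an L-bilipschitz homeomorphism with respect to the visual angle metric, i.e. v_{G₁}(x,y)/L ≤ v_{G₂}(f(x),f(y)) ≤ L v_{G₁}(x,y) for all x,y ∈ G₁. Then f is quasiconformal with linear dilatation H(x,f) ≤ 4L² at every point x ∈ G₁. -/
open Real Set Metric Filter Topology

/-- The linear dilatation `H(x,f) = limsup_{r→0⁺} L(x,f,r)/l(x,f,r)`. -/
noncomputable def linDil {n : ℕ} (f : EuclideanSpace ℝ (Fin n) → EuclideanSpace ℝ (Fin n))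
    (x : EuclideanSpace ℝ (Fin n)) : ℝ :=
  Filter.limsup (fun r : ℝ =>
      sSup {d | ∃ z, dist z x = r ∧ d = dist (f z) (f x)} /
      sInf {d | ∃ z, dist z x = r ∧ d = dist (f z) (f x)}) (𝓝[>] 0)

section Auxiliary

open scoped RealInnerProductSpace

variable {E : Type*} [NormedAddCommGroup E] [InnerProductSpace ℝ E]

lemma mem_of_dist_lt_infDist {α : Type*} [MetricSpace α] {G : Set α} {x z : α}
    (h : dist z x < infDist x Gᶜ) : z ∈ G := by
  by_contra hz
  have := Metric.infDist_le_dist_of_mem (x := x) (show z ∈ Gᶜ from hz)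
  rw [dist_comm] at h; linarith

lemma infDist_compl_pos {α : Type*} [MetricSpace α] {G : Set α} {x : α}
    (hG : IsOpen G) (hx : x ∈ G) (hGc : Gᶜ.Nonempty) : 0 < infDist x Gᶜ :=
  ((isClosed_compl_iff.2 hG).notMem_iff_infDist_pos hGc).1 (by simp [hx])

lemma exists_frontier_infDist [ProperSpace E] {G : Set E} (hG : IsOpen G) {x : E}
    (hx : x ∈ G) (hGc : Gᶜ.Nonempty) :
    ∃ p, p ∈ frontier G ∧ p ∉ G ∧ dist x p = infDist x Gᶜ := by
  have hd : 0 < infDist x Gᶜ := infDist_compl_pos hG hx hGc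
  obtain ⟨p, hpc, hpd⟩ := (isClosed_compl_iff.2 hG).exists_infDist_eq_dist hGc x
  set d := infDist x Gᶜ with hdd
  refine ⟨p, ?_, hpc, hpd.symm⟩
  rw [frontier_eq_closure_inter_closure, hG.isClosed_compl.closure_eq]
  refine ⟨?_, hpc⟩
  rw [Metric.mem_closure_iff]
  intro ε hε
  set m := min ε d with hm
  have hmpos : 0 < m := lt_min hε hd
  have hmd : m ≤ d := min_le_right _ _
  set t : ℝ := 1 - m / (2 * d) with ht
  have htlt : m / (2 * d) ≤ 1/2 := by
    rw [div_le_div_iff₀ (by linarith) (by norm_num)]; linarith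
  have htpos2 : 0 < m / (2*d) := by positivity
  have ht0 : 0 ≤ t := by rw [ht]; linarith
  have ht1 : t < 1 := by rw [ht]; linarith
  have hpx : ‖p - x‖ = d := by rw [hpd, dist_comm, dist_eq_norm]
  refine ⟨x + t • (p - x), ?_, ?_⟩
  · apply mem_of_dist_lt_infDist (x := x)
    rw [dist_eq_norm, add_sub_cancel_left, norm_smul, Real.norm_eq_abs, abs_of_nonneg ht0, hpx]
    calc t * d < 1 * d := by apply mul_lt_mul_of_pos_right ht1 hd
      _ = d := one_mul d
  · have : p - (x + t • (p - x)) = (1 - t) • (p - x) := by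
      module
    rw [dist_eq_norm, this, norm_smul, Real.norm_eq_abs, abs_of_nonneg (by linarith), hpx]
    have h1t : 1 - t = m / (2*d) := by rw [ht]; ring
    rw [h1t]
    calc m / (2*d) * d = m / 2 := by field_simp
      _ < ε := by have := min_le_left ε d; linarith

-- vector lemma for the upper bound
lemma angle_le_arcsin_aux {A B : E} {d : ℝ} (hd : 0 < d) (hA : d ≤ ‖A‖)
    (hAB : ‖A - B‖ < d) : InnerProductGeometry.angle A B ≤ arcsin (‖A - B‖ / d) := by
  have hAn : 0 < ‖A‖ := lt_of_lt_of_le hd hA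
  have hBn : 0 < ‖B‖ := by
    have h1 : ‖A‖ - ‖B‖ ≤ ‖A - B‖ := norm_sub_norm_le A B
    linarith
  set θ := InnerProductGeometry.angle A B with hθ
  have hθ0 : 0 ≤ θ := InnerProductGeometry.angle_nonneg A B
  have hsq : ‖A - B‖^2 = ‖A‖^2 - 2 * ⟪A, B⟫ + ‖B‖^2 := norm_sub_sq_real A B
  rcases le_or_gt θ (π/2) with hle | hgt
  · -- acute case
    have hkey := InnerProductGeometry.sin_angle_mul_norm_mul_norm A B
    have hAA : ⟪A, A⟫ = ‖A‖^2 := real_inner_self_eq_norm_sq A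
    have hBB : ⟪B, B⟫ = ‖B‖^2 := real_inner_self_eq_norm_sq B
    have hineq : ⟪A, A⟫ * ⟪B, B⟫ - ⟪A, B⟫ * ⟪A, B⟫ ≤ ‖B‖^2 * ‖A - B‖^2 := by
      rw [hAA, hBB]
      nlinarith [sq_nonneg (⟪A, B⟫ - ‖B‖^2)]
    have hsqrt : Real.sqrt (⟪A, A⟫ * ⟪B, B⟫ - ⟪A, B⟫ * ⟪A, B⟫) ≤ ‖B‖ * ‖A - B‖ := by
      calc Real.sqrt (⟪A, A⟫ * ⟪B, B⟫ - ⟪A, B⟫ * ⟪A, B⟫)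
          ≤ Real.sqrt (‖B‖^2 * ‖A - B‖^2) := Real.sqrt_le_sqrt hineq
        _ = ‖B‖ * ‖A - B‖ := by
            rw [show ‖B‖^2 * ‖A - B‖^2 = (‖B‖ * ‖A - B‖)^2 by ring,
              Real.sqrt_sq (by positivity)]
    have hsin : Real.sin θ ≤ ‖A - B‖ / d := by
      have h2 : Real.sin θ * (‖A‖ * ‖B‖) ≤ ‖B‖ * ‖A - B‖ := by
        rw [hkey]; exact hsqrt
      have h3 : Real.sin θ * ‖A‖ ≤ ‖A - B‖ := by
        refine le_of_mul_le_mul_right ?_ hBn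
        ring_nf at h2 ⊢
        linarith
      rw [le_div_iff₀ hd]
      calc Real.sin θ * d ≤ Real.sin θ * ‖A‖ := by
            apply mul_le_mul_of_nonneg_left hA
            exact Real.sin_nonneg_of_nonneg_of_le_pi hθ0 (InnerProductGeometry.angle_le_pi A B)
        _ ≤ ‖A - B‖ := h3
    calc θ = arcsin (Real.sin θ) := (Real.arcsin_sin (by linarith [Real.pi_pos]) hle).symm
      _ ≤ arcsin (‖A - B‖ / d) := Real.monotone_arcsin hsin
  · -- obtuse: contradiction
    exfalso
    have hcos : Real.cos θ < 0 :=
      Real.cos_neg_of_pi_div_two_lt_of_lt hgt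
        (lt_of_le_of_lt (InnerProductGeometry.angle_le_pi A B) (by linarith [Real.pi_pos]))
    have hinner : ⟪A, B⟫ < 0 := by
      have hc := InnerProductGeometry.cos_angle A B
      rw [← hθ] at hc
      have := hc ▸ hcos
      by_contra hge
      push_neg at hge
      have : 0 ≤ ⟪A, B⟫ / (‖A‖ * ‖B‖) := div_nonneg hge (by positivity)
      linarith
    have h5 : d^2 ≤ ‖A‖^2 := by nlinarith
    have h6 : ‖A - B‖^2 < d^2 := by nlinarith [norm_nonneg (A - B)]
    nlinarith [sq_nonneg ‖B‖]

-- halfspace: supporting hyperplane at nearest boundary point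
lemma halfspace_of_nearest [CompleteSpace E] {G : Set E} (hG : IsOpen G) (hconv : Convex ℝ G) {x p : E}
    (hx : x ∈ G) (hp : p ∉ G) (hpd : dist x p = infDist x Gᶜ)
    (hd : 0 < infDist x Gᶜ) :
    ∀ w ∈ G, ⟪w - p, p - x⟫ < 0 := by
  set d := infDist x Gᶜ with hdd
  obtain ⟨f, hf⟩ := geometric_hahn_banach_open_point hconv hG hp
  set a := (InnerProductSpace.toDual ℝ E).symm f with ha
  have hfa : ∀ w, f w = ⟪a, w⟫ := fun w => (InnerProductSpace.toDual_symm_apply).symm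
  have hane : a ≠ 0 := by
    intro h0
    have := hf x hx
    rw [hfa x, hfa p, h0] at this
    simp at this
  have hanorm : 0 < ‖a‖ := norm_pos_iff.2 hane
  have hpx : ‖p - x‖ = d := by rw [← hpd, dist_comm, dist_eq_norm]
  -- step 1 : f x + d * ‖a‖ ≤ f p
  have hstep : ⟪a, x⟫ + d * ‖a‖ ≤ ⟪a, p⟫ := by
    have hkey : ∀ t : ℝ, 0 ≤ t → t < 1 → ⟪a, x⟫ + t * (d * ‖a‖) < ⟪a, p⟫ := by
      intro t ht0 ht1
      have hw : x + (t * d / ‖a‖) • a ∈ G := by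
        apply mem_of_dist_lt_infDist (x := x)
        rw [dist_eq_norm, add_sub_cancel_left, norm_smul, Real.norm_eq_abs,
          abs_of_nonneg (by positivity)]
        rw [div_mul_cancel₀ _ (ne_of_gt hanorm)]
        calc t * d < 1 * d := by exact mul_lt_mul_of_pos_right ht1 hd
          _ = d := one_mul d
      have := hf _ hw
      rw [hfa, inner_add_right, real_inner_smul_right, real_inner_self_eq_norm_sq,
        hfa p] at this
      have heq : t * d / ‖a‖ * ‖a‖ ^ 2 = t * (d * ‖a‖) := by
        field_simp
      rw [heq] at this
      exact this
    by_contra hlt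
    push_neg at hlt
    have h0 : ⟪a, x⟫ < ⟪a, p⟫ := by
      have := hkey 0 le_rfl one_pos
      simpa using this
    set s := (⟪a, p⟫ - ⟪a, x⟫) / (d * ‖a‖) with hs
    have hs1 : s < 1 := by
      rw [hs, div_lt_one (by positivity)]
      linarith
    have hs0 : 0 ≤ s := div_nonneg (by linarith) (by positivity)
    have := hkey s hs0 hs1
    rw [hs, div_mul_cancel₀ _ (by positivity : d * ‖a‖ ≠ 0)] at this
    linarith
  -- step 2 : equality in Cauchy-Schwarz along p - x
  have hCS : ⟪a, p - x⟫ = ‖a‖ * ‖p - x‖ := by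
    have h1 : d * ‖a‖ ≤ ⟪a, p - x⟫ := by
      rw [inner_sub_right]; linarith
    have h2 : ⟪a, p - x⟫ ≤ ‖a‖ * ‖p - x‖ := real_inner_le_norm a (p - x)
    rw [hpx] at h2 ⊢
    linarith [h2]
  have hpar : ‖p - x‖ • a = ‖a‖ • (p - x) := inner_eq_norm_mul_iff_real.1 hCS
  -- conclude
  intro w hw
  have hfw : ⟪a, w - p⟫ < 0 := by
    rw [inner_sub_right]
    have := hf w hw
    rw [hfa w, hfa p] at this
    linarith
  have : ⟪w - p, p - x⟫ = (d / ‖a‖) * ⟪a, w - p⟫ := by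
    have h3 : p - x = (d / ‖a‖) • a := by
      have h4 : d • a = ‖a‖ • (p - x) := by rw [← hpx]; exact hpar
      have h5 := congrArg (fun z => (‖a‖⁻¹ : ℝ) • z) h4
      simp only [smul_smul] at h5
      rw [inv_mul_cancel₀ (ne_of_gt hanorm), one_smul] at h5
      rw [← h5]
      congr 1
      rw [div_eq_inv_mul]
    rw [h3, real_inner_smul_right, real_inner_comm]
  rw [this]
  exact mul_neg_of_pos_of_neg (by positivity) hfw

-- existence of a unit vector orthogonal to a given one, in dim ≥ 2
lemma exists_unit_orthogonal {n : ℕ} (hn : 2 ≤ n) (e : EuclideanSpace ℝ (Fin n)) :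
    ∃ w : EuclideanSpace ℝ (Fin n), ‖w‖ = 1 ∧ ⟪e, w⟫ = 0 := by
  set K := (ℝ ∙ e)ᗮ with hK
  have hKne : K ≠ ⊥ := by
    intro hbot
    have h1 : Module.finrank ℝ ↥(ℝ ∙ e) + Module.finrank ℝ ↥K = n := by
      rw [hK, Submodule.finrank_add_finrank_orthogonal, finrank_euclideanSpace]
      simp
    have h2 : Module.finrank ℝ ↥(ℝ ∙ e) ≤ 1 := by
      by_cases he : e = 0
      · subst he
        rw [Submodule.span_zero_singleton]
        simp
      · rw [finrank_span_singleton he]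
    rw [hbot] at h1
    rw [show Module.finrank ℝ (↥(⊥ : Submodule ℝ (EuclideanSpace ℝ (Fin n)))) = 0 from finrank_bot ℝ _] at h1
    omega
  obtain ⟨w, hwK, hw0⟩ := Submodule.exists_mem_ne_zero_of_ne_bot hKne
  refine ⟨‖w‖⁻¹ • w, ?_, ?_⟩
  · rw [norm_smul, Real.norm_eq_abs, abs_of_nonneg (by positivity),
      inv_mul_cancel₀ (norm_ne_zero_iff.2 hw0)]
  · rw [real_inner_smul_right]
    have : ⟪e, w⟫ = 0 := by
      have := hwK
      rw [hK, Submodule.mem_orthogonal] at this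
      exact this e (Submodule.mem_span_singleton_self e)
    rw [this, mul_zero]

lemma euc_angle_eq {n : ℕ} (x z y : EuclideanSpace ℝ (Fin n)) :
    EuclideanGeometry.angle x z y = InnerProductGeometry.angle (x - z) (y - z) := by
  rw [EuclideanGeometry.angle, vsub_eq_sub, vsub_eq_sub]

lemma visualAngle_le_arcsin {n : ℕ} {G : Set (EuclideanSpace ℝ (Fin n))} (hG : IsOpen G)
    {x y : EuclideanSpace ℝ (Fin n)} (hx : x ∈ G) (hGc : Gᶜ.Nonempty)
    (hy : dist x y < infDist x Gᶜ) :
    visualAngle G x y ≤ arcsin (dist x y / infDist x Gᶜ) := by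
  obtain ⟨p, hpf, -, -⟩ := exists_frontier_infDist hG hx hGc
  apply csSup_le (⟨_, Set.mem_image_of_mem _ hpf⟩)
  rintro b ⟨z, hzf, rfl⟩
  simp only
  have hzG : z ∉ G := by
    rw [hG.frontier_eq] at hzf
    exact hzf.2
  have hdz : infDist x Gᶜ ≤ dist x z := Metric.infDist_le_dist_of_mem hzG
  rw [euc_angle_eq]
  have hAB : (x - z) - (y - z) = x - y := by abel
  have h := angle_le_arcsin_aux (A := x - z) (B := y - z) (d := infDist x Gᶜ)
    (infDist_compl_pos hG hx hGc) (by rw [← dist_eq_norm]; exact hdz) ?_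
  · rwa [hAB, ← dist_eq_norm] at h
  · rw [hAB, ← dist_eq_norm]; exact hy

lemma angle_le_visualAngle {n : ℕ} {G : Set (EuclideanSpace ℝ (Fin n))}
    {x y z : EuclideanSpace ℝ (Fin n)} (hz : z ∈ frontier G) :
    EuclideanGeometry.angle x z y ≤ visualAngle G x y := by
  apply le_csSup
  · refine ⟨π, ?_⟩
    rintro b ⟨w, hwf, rfl⟩
    exact EuclideanGeometry.angle_le_pi _ _ _
  · exact Set.mem_image_of_mem _ hz

lemma arcsin_le_linear {ε : ℝ} (hε : 0 < ε) :
    ∃ s₀ > 0, ∀ s : ℝ, 0 ≤ s → s ≤ s₀ → arcsin s ≤ (1 + ε) * s := by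
  have hder : HasDerivAt arcsin 1 0 := by
    have := Real.hasDerivAt_arcsin (by norm_num : (0:ℝ) ≠ -1) (by norm_num : (0:ℝ) ≠ 1)
    simpa using this
  have hslope := hasDerivAt_iff_tendsto_slope.1 hder
  have hev : ∀ᶠ s in 𝓝[≠] (0:ℝ), slope arcsin 0 s < 1 + ε :=
    hslope.eventually (Iio_mem_nhds (by linarith))
  rw [Filter.Eventually, Metric.mem_nhdsWithin_iff] at hev
  obtain ⟨δ, hδ, hball⟩ := hev
  refine ⟨δ/2, by positivity, ?_⟩
  intro s hs0 hs1
  rcases eq_or_lt_of_le hs0 with h | h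
  · simp [← h]
  · have hmem : s ∈ Metric.ball (0:ℝ) δ ∩ {(0:ℝ)}ᶜ := by
      constructor
      · rw [Metric.mem_ball, Real.dist_eq, sub_zero, abs_of_pos h]; linarith
      · exact fun h0 => (ne_of_gt h) (by simpa using h0)
    have := hball hmem
    rw [Set.mem_setOf_eq, slope_def_field, Real.arcsin_zero] at this
    have h2 : (arcsin s - 0) / (s - 0) < 1 + ε := by simpa using this
    rw [sub_zero, sub_zero, div_lt_iff₀ h] at h2
    linarith [h2]

set_option maxHeartbeats 1000000 in
lemma visualAngle_lower {n : ℕ} (hn : 2 ≤ n) {G : Set (EuclideanSpace ℝ (Fin n))}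
    (hG : IsOpen G) (hconv : Convex ℝ G) {x y : EuclideanSpace ℝ (Fin n)}
    (hx : x ∈ G) (hy : y ∈ G) (hxy : y ≠ x) (hGc : Gᶜ.Nonempty) :
    dist x y / (2 * (dist x y + infDist x Gᶜ)) ≤ visualAngle G x y := by
  classical
  obtain ⟨d, hdd⟩ : ∃ d : ℝ, d = infDist x Gᶜ := ⟨_, rfl⟩
  have hd : 0 < d := hdd ▸ infDist_compl_pos hG hx hGc
  obtain ⟨p, hpf, hpG, hpd⟩ := exists_frontier_infDist hG hx hGc
  have hpx : ‖p - x‖ = d := by rw [hdd, ← hpd, dist_comm, dist_eq_norm]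
  obtain ⟨e, hen, hpe⟩ : ∃ e, ‖e‖ = 1 ∧ p - x = d • e := by
    refine ⟨d⁻¹ • (p - x), ?_, ?_⟩
    · rw [norm_smul, Real.norm_eq_abs, abs_of_pos (inv_pos.2 hd), hpx,
        inv_mul_cancel₀ (ne_of_gt hd)]
    · rw [smul_smul, mul_inv_cancel₀ (ne_of_gt hd), one_smul]
  have hee : ⟪e, e⟫ = 1 := by rw [real_inner_self_eq_norm_sq, hen]; norm_num
  have hplane : ∀ w ∈ G, ⟪w - p, e⟫ < 0 := by
    intro w hw
    have h1 := halfspace_of_nearest hG hconv hx hpG hpd (hdd ▸ hd) w hw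
    rw [hpe, real_inner_smul_right] at h1
    by_contra hge
    push_neg at hge
    linarith only [h1, mul_nonneg hd.le hge]
  obtain ⟨v, hv⟩ : ∃ v, v = y - x := ⟨_, rfl⟩
  obtain ⟨r, hr⟩ : ∃ r : ℝ, r = ‖v‖ := ⟨_, rfl⟩
  have hrpos : 0 < r := by
    rw [hr, hv, norm_pos_iff]
    exact sub_ne_zero.2 hxy
  have hrdist : r = dist x y := by rw [hr, hv, dist_eq_norm, norm_sub_rev]
  obtain ⟨c, hc⟩ : ∃ c : ℝ, c = ⟪v, e⟫ := ⟨_, rfl⟩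
  have hve : ⟪v, e⟫ = c := hc.symm
  have hev : ⟪e, v⟫ = c := by rw [real_inner_comm]; exact hve
  have hvv : ⟪v, v⟫ = r^2 := by rw [real_inner_self_eq_norm_sq, hr]
  obtain ⟨u, hu⟩ : ∃ u, u = v - c • e := ⟨_, rfl⟩
  have hue : ⟪e, u⟫ = 0 := by
    simp only [hu, inner_sub_right, real_inner_smul_right, hee, hev]
    ring
  have hue' : ⟪u, e⟫ = 0 := by rw [real_inner_comm]; exact hue
  have hpyth : r^2 = c^2 + ‖u‖^2 := by
    have h2 : ⟪u, u⟫ = r^2 - c^2 := by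
      simp only [hu, inner_sub_left, inner_sub_right, real_inner_smul_left,
        real_inner_smul_right, hee, hev, hve, hvv]
      ring
    have h1 : ⟪u, u⟫ = ‖u‖^2 := real_inner_self_eq_norm_sq u
    linarith
  have hUnn : 0 ≤ ‖u‖ := norm_nonneg u
  have hur : ‖u‖ ≤ r := by
    have h1 : ‖u‖^2 ≤ r^2 := by linarith only [hpyth, sq_nonneg c]
    rw [← Real.sqrt_sq hUnn, ← Real.sqrt_sq hrpos.le]
    exact Real.sqrt_le_sqrt h1
  -- the auxiliary orthogonal direction
  obtain ⟨w, hwn, hwe, hwv⟩ : ∃ w, ‖w‖ = 1 ∧ ⟪e, w⟫ = 0 ∧ ⟪w, v⟫ = ‖u‖ := by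
    by_cases h0 : u = 0
    · obtain ⟨w, hw1, hw2⟩ := exists_unit_orthogonal hn e
      refine ⟨w, hw1, hw2, ?_⟩
      have hv0 : v = c • e := by
        have h1 : v - c • e = 0 := by rw [← hu]; exact h0
        have h2 := sub_eq_zero.1 h1
        exact h2
      rw [hv0, real_inner_smul_right, real_inner_comm, hw2, h0, norm_zero, mul_zero]
    · refine ⟨‖u‖⁻¹ • u, ?_, ?_, ?_⟩
      · have hupos : 0 < ‖u‖ := norm_pos_iff.2 h0
        rw [norm_smul, Real.norm_eq_abs, abs_of_pos (by positivity),
          inv_mul_cancel₀ (norm_ne_zero_iff.2 h0)]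
      · rw [real_inner_smul_right, hue, mul_zero]
      · have huv : ⟪u, v⟫ = ‖u‖^2 := by
          have hveq : v = u + c • e := by rw [hu]; abel
          rw [hveq, inner_add_right, real_inner_smul_right, hue',
            real_inner_self_eq_norm_sq]
          ring
        rw [real_inner_smul_left, huv]
        rw [sq]
        rw [← mul_assoc, inv_mul_cancel₀ (norm_ne_zero_iff.2 h0), one_mul]
  -- the tilt parameters
  obtain ⟨β, hβ⟩ : ∃ β : ℝ, β = Real.sqrt ((r + ‖u‖)/(2*r)) := ⟨_, rfl⟩
  obtain ⟨γ, hγ⟩ : ∃ γ : ℝ, γ = Real.sqrt ((r - ‖u‖)/(2*r)) := ⟨_, rfl⟩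
  have hβsq : β^2 = (r + ‖u‖)/(2*r) := by
    rw [hβ, sq, Real.mul_self_sqrt (div_nonneg (by linarith) (by linarith))]
  have hγsq : γ^2 = (r - ‖u‖)/(2*r) := by
    rw [hγ, sq, Real.mul_self_sqrt (div_nonneg (by linarith) (by linarith))]
  have hβpos : 0 < β := by
    rw [hβ]
    exact Real.sqrt_pos.2 (div_pos (by linarith) (by linarith))
  have hγnn : 0 ≤ γ := hγ ▸ Real.sqrt_nonneg _
  have hsum : β^2 + γ^2 = 1 := by rw [hβsq, hγsq]; field_simp; ring
  have hβle1 : β ≤ 1 := by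
    have h1 : β^2 ≤ 1 := by
      rw [hβsq, div_le_one (by linarith only [hrpos])]
      linarith only [hur, hrpos]
    have h2 := (sq_le_one_iff_abs_le_one (a := β)).1 h1
    have h3 := (abs_le.1 h2).2
    linarith only [le_abs_self β, h3]
  have hβγ : β * γ = |c| / (2*r) := by
    rw [hβ, hγ, ← Real.sqrt_mul (div_nonneg (by linarith) (by linarith))]
    have hcc : c^2 = r^2 - ‖u‖^2 := by linarith
    have : (r + ‖u‖)/(2*r) * ((r - ‖u‖)/(2*r)) = (|c|/(2*r))^2 := by
      rw [div_pow, sq_abs, hcc]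
      field_simp
      ring
    rw [this, Real.sqrt_sq (div_nonneg (abs_nonneg c) (by linarith))]
  obtain ⟨σ, hσ1, hσ2⟩ : ∃ σ : ℝ, σ^2 = 1 ∧ σ * c = |c| := by
    rcases le_or_gt 0 c with h | h
    · exact ⟨1, by norm_num, by rw [one_mul, abs_of_nonneg h]⟩
    · exact ⟨-1, by norm_num, by rw [abs_of_neg h]; ring⟩
  obtain ⟨ω, hω⟩ : ∃ ω, ω = β • e - (σ * γ) • w := ⟨_, rfl⟩
  have hww : ⟪w, w⟫ = 1 := by rw [real_inner_self_eq_norm_sq, hwn]; norm_num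
  have hwe' : ⟪w, e⟫ = 0 := by rw [real_inner_comm]; exact hwe
  have hωω : ⟪ω, ω⟫ = 1 := by
    simp only [hω, inner_sub_left, inner_sub_right, real_inner_smul_left,
      real_inner_smul_right, hee, hww, hwe, hwe']
    linear_combination γ^2 * hσ1 + hsum
  have hωn : ‖ω‖ = 1 := by
    have h1 : ‖ω‖^2 = 1 := by rw [← real_inner_self_eq_norm_sq, hωω]
    rw [← Real.sqrt_sq (norm_nonneg ω), h1, Real.sqrt_one]
  have hωe : ⟪ω, e⟫ = β := by
    simp only [hω, inner_sub_left, real_inner_smul_left, hee, hwe']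
    try ring
  have hωv : ⟪ω, v⟫ = β * c - σ * γ * ‖u‖ := by
    simp only [hω, inner_sub_left, real_inner_smul_left, hev, hwv]
    try ring
  have hvω : ⟪v, ω⟫ = β * c - σ * γ * ‖u‖ := by rw [real_inner_comm]; exact hωv
  -- the exit time along ω
  obtain ⟨S, hS⟩ : ∃ S : Set ℝ, S = {t : ℝ | 0 ≤ t ∧ x + t • ω ∈ G} := ⟨_, rfl⟩
  have hS0 : (0:ℝ) ∈ S := by
    rw [hS]
    refine ⟨le_rfl, ?_⟩
    rw [zero_smul, add_zero]
    exact hx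
  have hSne : S.Nonempty := ⟨0, hS0⟩
  have hSmem : ∀ t ∈ S, t * β < d := by
    intro t ht
    rw [hS] at ht
    have h1 := hplane _ ht.2
    have h2 : x + t • ω - p = t • ω + (x - p) := by abel
    have h3 : x - p = -(d • e) := by rw [← hpe]; abel
    rw [h2] at h1
    simp only [h3, inner_add_left, inner_neg_left, real_inner_smul_left, hωe, hee,
      mul_one] at h1
    linarith
  have hSbdd : BddAbove S := by
    refine ⟨d / β, ?_⟩
    intro t ht
    have := hSmem t ht
    rw [le_div_iff₀ hβpos]
    linarith
  obtain ⟨T, hT⟩ : ∃ T : ℝ, T = sSup S := ⟨_, rfl⟩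
  have hTd : d ≤ T := by
    have hsub : ∀ t, 0 ≤ t → t < d → t ∈ S := by
      intro t ht0 htd
      rw [hS]
      refine ⟨ht0, mem_of_dist_lt_infDist (x := x) ?_⟩
      rw [dist_eq_norm, add_sub_cancel_left, norm_smul, Real.norm_eq_abs,
        abs_of_nonneg ht0, hωn, mul_one, ← hdd]
      exact htd
    by_contra hcon
    push_neg at hcon
    have hT0 : 0 ≤ T := by rw [hT]; exact le_csSup hSbdd hS0
    have hmem : (T + d)/2 ∈ S := hsub _ (by linarith) (by linarith)
    have h5 : (T + d)/2 ≤ T := by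
      have h6 := le_csSup hSbdd hmem
      rwa [← hT] at h6
    linarith only [h5, hcon, hd]
  have hTpos : 0 < T := lt_of_lt_of_le hd hTd
  have hTub : T * β ≤ d := by
    have h1 : T ≤ d / β := by
      rw [hT]
      exact csSup_le hSne (fun t ht => by
        have := hSmem t ht
        rw [le_div_iff₀ hβpos]
        linarith)
    calc T * β ≤ (d/β) * β := by exact mul_le_mul_of_nonneg_right h1 (le_of_lt hβpos)
      _ = d := by field_simp
  obtain ⟨q, hq⟩ : ∃ q, q = x + T • ω := ⟨_, rfl⟩
  have hqcl : q ∈ closure G := by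
    rw [Metric.mem_closure_iff]
    intro ε hε
    have hlt : T - min ε T < T := sub_lt_self T (lt_min hε hTpos)
    have hlt' : T - min ε T < sSup S := by rw [← hT]; exact hlt
    obtain ⟨t, htS, htgt⟩ := exists_lt_of_lt_csSup hSne hlt'
    have htle : t ≤ T := by rw [hT]; exact le_csSup hSbdd htS
    rw [hS] at htS
    refine ⟨x + t • ω, htS.2, ?_⟩
    rw [hq, dist_eq_norm]
    have h2 : x + T • ω - (x + t • ω) = (T - t) • ω := by
      rw [sub_smul]; abel
    rw [h2, norm_smul, Real.norm_eq_abs, hωn, mul_one, abs_of_nonneg (by linarith)]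
    have := min_le_left ε T
    linarith
  have hqG : q ∉ G := by
    intro hqmem
    obtain ⟨ε, hε, hball⟩ := Metric.isOpen_iff.1 hG q hqmem
    have hmem : T + ε/2 ∈ S := by
      rw [hS]
      refine ⟨by linarith, hball ?_⟩
      rw [Metric.mem_ball, hq, dist_eq_norm]
      have h2 : x + (T + ε/2) • ω - (x + T • ω) = (ε/2) • ω := by
        rw [add_smul]; abel
      rw [h2, norm_smul, Real.norm_eq_abs, hωn, mul_one, abs_of_nonneg (by linarith)]
      linarith
    have h5 : T + ε/2 ≤ T := by
      have h6 := le_csSup hSbdd hmem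
      rwa [← hT] at h6
    linarith only [h5, hε]
  have hqfr : q ∈ frontier G := by
    rw [hG.frontier_eq]
    exact ⟨hqcl, hqG⟩
  -- geometry at q
  have hA : x - q = -(T • ω) := by rw [hq]; abel
  have hB : y - q = v - T • ω := by rw [hq, hv]; abel
  have hAn : ‖x - q‖ = T := by
    rw [hA, norm_neg, norm_smul, Real.norm_eq_abs, hωn, mul_one, abs_of_pos hTpos]
  have hyq : y ≠ q := fun h => hqG (h ▸ hy)
  have hBpos : 0 < ‖y - q‖ := norm_pos_iff.2 (sub_ne_zero.2 hyq)
  have hBle : ‖y - q‖ ≤ r + T := by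
    rw [hB]
    calc ‖v - T • ω‖ ≤ ‖v‖ + ‖T • ω‖ := norm_sub_le _ _
      _ = r + T := by
          rw [← hr, norm_smul, Real.norm_eq_abs, hωn, mul_one, abs_of_pos hTpos]
  have hAA : ⟪x - q, x - q⟫ = T^2 := by
    simp only [hA, inner_neg_neg, real_inner_smul_left, real_inner_smul_right, hωω]
    ring
  have hAB : ⟪x - q, y - q⟫ = T^2 - T*(β * c - σ * γ * ‖u‖) := by
    simp only [hA, hB, inner_neg_left, inner_sub_right, real_inner_smul_left,
      real_inner_smul_right, hωv, hωω]
    ring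
  have hBB : ⟪y - q, y - q⟫ = r^2 - 2*T*(β * c - σ * γ * ‖u‖) + T^2 := by
    simp only [hB, inner_sub_left, inner_sub_right, real_inner_smul_left,
      real_inner_smul_right, hvv, hvω, hωv, hωω]
    ring
  have hkeyid : r^2 - (β * c - σ * γ * ‖u‖)^2 = (γ * |c| + β * ‖u‖)^2 := by
    linear_combination hpyth + (2*β*γ*‖u‖)*hσ2 - γ^2*‖u‖^2*hσ1 - γ^2*(sq_abs c)
      - (c^2 + ‖u‖^2)*hsum
  have hDnn : 0 ≤ γ * |c| + β * ‖u‖ := by positivity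
  have hinside : ⟪x - q, x - q⟫ * ⟪y - q, y - q⟫ - ⟪x - q, y - q⟫ * ⟪x - q, y - q⟫
      = (T * (γ * |c| + β * ‖u‖))^2 := by
    rw [hAA, hAB, hBB]
    linear_combination (T^2) * hkeyid
  have hsin := InnerProductGeometry.sin_angle_mul_norm_mul_norm (x - q) (y - q)
  rw [hinside, Real.sqrt_sq (by positivity), hAn] at hsin
  have hsinval : Real.sin (InnerProductGeometry.angle (x - q) (y - q)) * ‖y - q‖
      = γ * |c| + β * ‖u‖ := by
    refine mul_left_cancel₀ (ne_of_gt hTpos) ?_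
    linear_combination hsin
  -- lower bound the sine
  have hrne : r ≠ 0 := ne_of_gt hrpos
  have hβγ' : 2*r*(β*γ) = |c| := by rw [hβγ]; field_simp
  have hβsq' : 2*r*β^2 = r + ‖u‖ := by rw [hβsq]; field_simp
  have hDb : (γ * |c| + β * ‖u‖) * β = (r + ‖u‖)/2 := by
    apply mul_left_cancel₀ (show (2*r) ≠ 0 by positivity)
    linear_combination (|c|) * hβγ' + ‖u‖*hβsq' + (sq_abs c) - hpyth
  have hBβ : ‖y - q‖ * β ≤ r + d := by
    have h1 : ‖y - q‖ * β ≤ (r + T) * β := mul_le_mul_of_nonneg_right hBle (le_of_lt hβpos)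
    have h2 : r * β ≤ r := by
      have h3 := mul_le_mul_of_nonneg_left hβle1 hrpos.le
      rwa [mul_one] at h3
    have h4 : (r + T) * β = r * β + T * β := by ring
    linarith only [h1, h2, h4, hTub]
  have hsinlb : r / (2*(r + d)) ≤ Real.sin (InnerProductGeometry.angle (x - q) (y - q)) := by
    have hsβ : Real.sin (InnerProductGeometry.angle (x - q) (y - q)) * (‖y - q‖ * β)
        = (r + ‖u‖)/2 := by
      rw [← hDb, ← hsinval]; ring
    have hBβpos : 0 < ‖y - q‖ * β := mul_pos hBpos hβpos
    have e1 : Real.sin (InnerProductGeometry.angle (x - q) (y - q))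
        = ((r + ‖u‖)/2) / (‖y - q‖ * β) := by
      rw [eq_div_iff (ne_of_gt hBβpos)]
      exact hsβ
    rw [e1, ← div_div]
    exact div_le_div₀ (by linarith only [hrpos, hUnn]) (by linarith only [hUnn]) hBβpos hBβ
  -- conclude
  have hangle : r / (2*(r + d)) ≤ EuclideanGeometry.angle x q y := by
    rw [euc_angle_eq]
    have h1 : Real.sin (InnerProductGeometry.angle (x - q) (y - q))
        ≤ InnerProductGeometry.angle (x - q) (y - q) :=
      Real.sin_le (InnerProductGeometry.angle_nonneg _ _)
    linarith
  have := angle_le_visualAngle (G := G) (x := x) (y := y) hqfr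
  rw [hrdist, hdd] at hangle
  linarith

end Auxiliary

set_option maxHeartbeats 1000000 in
/-- A bilipschitz map w.r.t. the visual angle metric between proper convex subdomains is
quasiconformal, with linear dilatation at most `4L²` at every point. -/
theorem linDil_le_of_visualAngle_bilipschitz {n : ℕ} (hn : 2 ≤ n)
    (G₁ G₂ : Set (EuclideanSpace ℝ (Fin n)))
    (hopen₁ : IsOpen G₁) (hconv₁ : Convex ℝ G₁) (hne₁ : G₁.Nonempty) (hproper₁ : G₁ ≠ univ)
    (hopen₂ : IsOpen G₂) (hconv₂ : Convex ℝ G₂) (hne₂ : G₂.Nonempty) (hproper₂ : G₂ ≠ univ)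
    (f : EuclideanSpace ℝ (Fin n) → EuclideanSpace ℝ (Fin n))
    (hbij : BijOn f G₁ G₂) (hcont : ContinuousOn f G₁)
    (hcontinv : ContinuousOn (Function.invFunOn f G₁) G₂)
    (L : ℝ) (hL : 1 ≤ L)
    (hlip : ∀ x ∈ G₁, ∀ y ∈ G₁,
      visualAngle G₁ x y / L ≤ visualAngle G₂ (f x) (f y) ∧
      visualAngle G₂ (f x) (f y) ≤ L * visualAngle G₁ x y) :
    ∀ x ∈ G₁, linDil f x ≤ 4 * L ^ 2 := by
  intro x hx
  have hL0 : 0 < L := lt_of_lt_of_le one_pos hL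
  have hG₁c : G₁ᶜ.Nonempty := Set.nonempty_compl.2 hproper₁
  have hG₂c : G₂ᶜ.Nonempty := Set.nonempty_compl.2 hproper₂
  have hd₁ : 0 < infDist x G₁ᶜ := infDist_compl_pos hopen₁ hx hG₁c
  have hfx : f x ∈ G₂ := hbij.mapsTo hx
  have hd₂ : 0 < infDist (f x) G₂ᶜ := infDist_compl_pos hopen₂ hfx hG₂c
  obtain ⟨D₁, hD₁⟩ : ∃ D : ℝ, D = infDist x G₁ᶜ := ⟨_, rfl⟩
  obtain ⟨D₂, hD₂⟩ : ∃ D : ℝ, D = infDist (f x) G₂ᶜ := ⟨_, rfl⟩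
  rw [← hD₁] at hd₁
  rw [← hD₂] at hd₂
  -- nonnegativity of the dilatation quotient
  have hnonneg : ∀ r : ℝ,
      0 ≤ sSup {d | ∃ z, dist z x = r ∧ d = dist (f z) (f x)} /
          sInf {d | ∃ z, dist z x = r ∧ d = dist (f z) (f x)} := by
    intro r
    apply div_nonneg
    · apply Real.sSup_nonneg
      rintro ρ ⟨z, hz, rfl⟩
      exact dist_nonneg
    · apply Real.sInf_nonneg
      rintro ρ ⟨z, hz, rfl⟩
      exact dist_nonneg
  have hcb : Filter.IsCoboundedUnder (· ≤ ·) (𝓝[>] (0:ℝ))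
      (fun r : ℝ => sSup {d | ∃ z, dist z x = r ∧ d = dist (f z) (f x)} /
        sInf {d | ∃ z, dist z x = r ∧ d = dist (f z) (f x)}) := by
    apply Filter.IsBoundedUnder.isCoboundedUnder_le (α := ℝ)
    exact Filter.isBoundedUnder_of ⟨0, fun r => hnonneg r⟩
  rw [linDil]
  refine le_of_forall_gt_imp_ge_of_dense ?_
  intro K hK
  -- choose ε
  obtain ⟨ε, hε0, hε1, hεK⟩ : ∃ ε : ℝ, 0 < ε ∧ ε ≤ 1 ∧ 4*L^2*(1+ε)^4 ≤ K := by
    refine ⟨min 1 ((K - 4*L^2)/(60*L^2)), lt_min one_pos (div_pos (by linarith) (by positivity)),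
      min_le_left _ _, ?_⟩
    set ε := min 1 ((K - 4*L^2)/(60*L^2)) with hεdef
    have hεpos : 0 < ε := lt_min one_pos (div_pos (by linarith) (by positivity))
    have hεle1 : ε ≤ 1 := min_le_left _ _
    have hεle : ε ≤ (K - 4*L^2)/(60*L^2) := min_le_right _ _
    have h60 : 60*L^2*ε ≤ K - 4*L^2 := by
      have h1 : 60*L^2*ε ≤ 60*L^2*((K - 4*L^2)/(60*L^2)) :=
        mul_le_mul_of_nonneg_left hεle (by positivity)
      have h2 : 60*L^2*((K - 4*L^2)/(60*L^2)) = K - 4*L^2 := by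
        field_simp
      linarith
    have e2 : ε^2 ≤ ε := by nlinarith
    have e3 : ε^3 ≤ ε := by nlinarith
    have e4 : ε^4 ≤ ε := by nlinarith
    have h15 : (1+ε)^4 ≤ 1 + 15*ε := by nlinarith
    nlinarith [sq_nonneg L, hL0]
  -- arcsin bound
  obtain ⟨s₀, hs₀, harc⟩ := arcsin_le_linear hε0
  -- continuity at x
  have hca : ContinuousAt f x := hcont.continuousAt (hopen₁.mem_nhds hx)
  rw [Metric.continuousAt_iff] at hca
  obtain ⟨δc, hδc, hδcP⟩ := hca (min (ε*D₂) (s₀*D₂)) (by positivity)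
  -- the radius bound
  obtain ⟨δ, hδdef⟩ : ∃ δ : ℝ, δ = min (min δc (D₁/2)) (min (ε*D₁) (s₀*D₁)) := ⟨_, rfl⟩
  have hδpos : 0 < δ := by
    rw [hδdef]
    exact lt_min (lt_min hδc (by linarith)) (lt_min (by positivity) (by positivity))
  apply Filter.limsup_le_of_le hcb
  filter_upwards [Ioo_mem_nhdsGT_of_mem (left_mem_Ico.2 hδpos)] with r hr
  obtain ⟨hr0, hrδ⟩ := hr
  have hrδc : r < δc := lt_of_lt_of_le hrδ (by rw [hδdef]; exact le_trans (min_le_left _ _) (min_le_left _ _))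
  have hrD1 : r < D₁/2 := lt_of_lt_of_le hrδ (by rw [hδdef]; exact le_trans (min_le_left _ _) (min_le_right _ _))
  have hrεD1 : r < ε*D₁ := lt_of_lt_of_le hrδ (by rw [hδdef]; exact le_trans (min_le_right _ _) (min_le_left _ _))
  have hrsD1 : r < s₀*D₁ := lt_of_lt_of_le hrδ (by rw [hδdef]; exact le_trans (min_le_right _ _) (min_le_right _ _))
  -- the key pointwise bounds
  obtain ⟨M, hM⟩ : ∃ M : ℝ, M = 2*L*(1+ε)^2*D₂/D₁ := ⟨_, rfl⟩
  obtain ⟨m, hm⟩ : ∃ m : ℝ, m = D₂/(2*L*(1+ε)^2*D₁) := ⟨_, rfl⟩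
  have hmpos : 0 < m := by
    rw [hm]
    exact div_pos hd₂ (mul_pos (mul_pos (mul_pos two_pos hL0)
      (pow_pos (by linarith) 2)) hd₁)
  have hMpos : 0 < M := by
    rw [hM]
    exact div_pos (mul_pos (mul_pos (mul_pos two_pos hL0) (pow_pos (by linarith) 2)) hd₂) hd₁
  have key : ∀ ρ ∈ {d | ∃ z, dist z x = r ∧ d = dist (f z) (f x)}, m*r ≤ ρ ∧ ρ ≤ M*r := by
    rintro ρ ⟨z, hzr, rfl⟩
    have hzG : z ∈ G₁ := mem_of_dist_lt_infDist (by rw [hzr, ← hD₁]; linarith)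
    have hzne : z ≠ x := by
      intro h
      rw [h, dist_self] at hzr
      linarith
    have hfz : f z ∈ G₂ := hbij.mapsTo hzG
    have hfzne : f z ≠ f x := hbij.injOn.ne hzG hx hzne
    have hρpos : 0 < dist (f z) (f x) := dist_pos.2 hfzne
    have hρlt : dist (f z) (f x) < min (ε*D₂) (s₀*D₂) := hδcP (by rw [hzr]; exact hrδc)
    have hρε : dist (f z) (f x) < ε*D₂ := lt_of_lt_of_le hρlt (min_le_left _ _)
    have hρs : dist (f z) (f x) < s₀*D₂ := lt_of_lt_of_le hρlt (min_le_right _ _)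
    have hρD2 : dist (f z) (f x) < D₂ := by
      have h1 : ε*D₂ ≤ 1*D₂ := mul_le_mul_of_nonneg_right hε1 (le_of_lt hd₂)
      linarith only [hρε, h1]
    have hdxz : dist x z = r := by rw [dist_comm]; exact hzr
    have hdfxz : dist (f x) (f z) = dist (f z) (f x) := dist_comm _ _
    have hlipz := hlip x hx z hzG
    constructor
    · -- lower bound : m * r ≤ ρ
      have v1low : dist x z / (2*(dist x z + infDist x G₁ᶜ)) ≤ visualAngle G₁ x z :=
        visualAngle_lower hn hopen₁ hconv₁ hx hzG hzne hG₁c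
      rw [hdxz, ← hD₁] at v1low
      have v2up : visualAngle G₂ (f x) (f z) ≤ arcsin (dist (f x) (f z) / infDist (f x) G₂ᶜ) :=
        visualAngle_le_arcsin hopen₂ hfx hG₂c (by rw [hdfxz, ← hD₂]; exact hρD2)
      rw [hdfxz, ← hD₂] at v2up
      have harc2 : arcsin (dist (f z) (f x) / D₂) ≤ (1+ε) * (dist (f z) (f x) / D₂) := by
        apply harc
        · positivity
        · rw [div_le_iff₀ hd₂]
          linarith only [hρs]
      have hv1v2 : visualAngle G₁ x z ≤ L * visualAngle G₂ (f x) (f z) := by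
        have h1 := hlipz.1
        rw [div_le_iff₀ hL0] at h1
        calc visualAngle G₁ x z ≤ visualAngle G₂ (f x) (f z) * L := h1
          _ = L * visualAngle G₂ (f x) (f z) := mul_comm _ _
      have chain : r / (2*(r + D₁)) ≤ L * ((1+ε) * (dist (f z) (f x) / D₂)) := by
        calc r / (2*(r + D₁)) ≤ visualAngle G₁ x z := v1low
          _ ≤ L * visualAngle G₂ (f x) (f z) := hv1v2
          _ ≤ L * ((1+ε) * (dist (f z) (f x) / D₂)) := by
              apply mul_le_mul_of_nonneg_left (le_trans v2up harc2) (le_of_lt hL0)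
      have c5 : r ≤ 2*(r + D₁) * (L * ((1+ε) * (dist (f z) (f x) / D₂))) := by
        rw [div_le_iff₀ (by positivity)] at chain
        linarith
      have c6 : r + D₁ ≤ (1+ε)*D₁ := by
        have h9 : (1+ε)*D₁ = D₁ + ε*D₁ := by ring
        linarith only [h9, hrεD1]
      have hρD2nn : 0 ≤ L * ((1+ε) * (dist (f z) (f x) / D₂)) := by positivity
      have c5' : r ≤ 2*((1+ε)*D₁) * (L * ((1+ε) * (dist (f z) (f x) / D₂))) := by
        calc r ≤ 2*(r + D₁) * (L * ((1+ε) * (dist (f z) (f x) / D₂))) := c5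
          _ ≤ 2*((1+ε)*D₁) * (L * ((1+ε) * (dist (f z) (f x) / D₂))) := by
              apply mul_le_mul_of_nonneg_right _ hρD2nn
              linarith
      have c7 : r * D₂ ≤ 2*L*(1+ε)^2*D₁ * dist (f z) (f x) := by
        have h8 := mul_le_mul_of_nonneg_right c5' (le_of_lt hd₂)
        have heq : 2*((1+ε)*D₁) * (L * ((1+ε) * (dist (f z) (f x) / D₂))) * D₂
            = 2*L*(1+ε)^2*D₁ * dist (f z) (f x) := by
          field_simp
        rw [heq] at h8
        exact h8
      rw [hm, div_mul_eq_mul_div, div_le_iff₀ (by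
        exact mul_pos (mul_pos (mul_pos two_pos hL0) (pow_pos (by linarith) 2)) hd₁)]
      linarith only [c7]
    · -- upper bound : ρ ≤ M * r
      have v2low : dist (f x) (f z) / (2*(dist (f x) (f z) + infDist (f x) G₂ᶜ))
          ≤ visualAngle G₂ (f x) (f z) :=
        visualAngle_lower hn hopen₂ hconv₂ hfx hfz hfzne hG₂c
      rw [hdfxz, ← hD₂] at v2low
      have v1up : visualAngle G₁ x z ≤ arcsin (dist x z / infDist x G₁ᶜ) :=
        visualAngle_le_arcsin hopen₁ hx hG₁c (by rw [hdxz, ← hD₁]; linarith)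
      rw [hdxz, ← hD₁] at v1up
      have harc1 : arcsin (r / D₁) ≤ (1+ε) * (r / D₁) := by
        apply harc
        · positivity
        · rw [div_le_iff₀ hd₁]
          linarith only [hrsD1]
      have chain : dist (f z) (f x) / (2*(dist (f z) (f x) + D₂)) ≤ L * ((1+ε) * (r / D₁)) := by
        calc dist (f z) (f x) / (2*(dist (f z) (f x) + D₂))
            ≤ visualAngle G₂ (f x) (f z) := v2low
          _ ≤ L * visualAngle G₁ x z := hlipz.2
          _ ≤ L * ((1+ε) * (r / D₁)) := by
              apply mul_le_mul_of_nonneg_left (le_trans v1up harc1) (le_of_lt hL0)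
      have c2 : dist (f z) (f x) ≤ 2*(dist (f z) (f x) + D₂) * (L * ((1+ε) * (r / D₁))) := by
        rw [div_le_iff₀ (by positivity)] at chain
        linarith
      have c3 : dist (f z) (f x) + D₂ ≤ (1+ε)*D₂ := by
        have h9 : (1+ε)*D₂ = D₂ + ε*D₂ := by ring
        linarith only [h9, hρε]
      have hcnn : 0 ≤ L * ((1+ε) * (r / D₁)) := by
        apply mul_nonneg (le_of_lt hL0)
        apply mul_nonneg (by linarith)
        exact div_nonneg (le_of_lt hr0) (le_of_lt hd₁)
      have c4 : dist (f z) (f x) ≤ 2*((1+ε)*D₂) * (L * ((1+ε) * (r / D₁))) := by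
        calc dist (f z) (f x) ≤ 2*(dist (f z) (f x) + D₂) * (L * ((1+ε) * (r / D₁))) := c2
          _ ≤ 2*((1+ε)*D₂) * (L * ((1+ε) * (r / D₁))) := by
              apply mul_le_mul_of_nonneg_right _ hcnn
              linarith
      have heq : 2*((1+ε)*D₂) * (L * ((1+ε) * (r / D₁))) = M*r := by
        rw [hM]
        field_simp
      rw [heq] at c4
      exact c4
  -- assemble
  have hSrne : {d | ∃ z, dist z x = r ∧ d = dist (f z) (f x)}.Nonempty := by
    have hnpos : 0 < n := by omega
    refine ⟨dist (f (x + r • EuclideanSpace.single (⟨0, hnpos⟩ : Fin n) (1:ℝ))) (f x),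
      x + r • EuclideanSpace.single (⟨0, hnpos⟩ : Fin n) (1:ℝ), ?_, rfl⟩
    rw [dist_eq_norm, add_sub_cancel_left, norm_smul, Real.norm_eq_abs,
      abs_of_pos hr0, EuclideanSpace.norm_single]
    norm_num
  have hsup : sSup {d | ∃ z, dist z x = r ∧ d = dist (f z) (f x)} ≤ M*r :=
    csSup_le hSrne (fun ρ hρ => (key ρ hρ).2)
  have hinf : m*r ≤ sInf {d | ∃ z, dist z x = r ∧ d = dist (f z) (f x)} :=
    le_csInf hSrne (fun ρ hρ => (key ρ hρ).1)
  have hmr : 0 < m*r := mul_pos hmpos hr0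
  have hratio : sSup {d | ∃ z, dist z x = r ∧ d = dist (f z) (f x)} /
      sInf {d | ∃ z, dist z x = r ∧ d = dist (f z) (f x)} ≤ (M*r)/(m*r) :=
    div_le_div₀ (by positivity) hsup hmr hinf
  have heq2 : (M*r)/(m*r) = M/m := mul_div_mul_right _ _ (ne_of_gt hr0)
  have heq3 : M/m = 4*L^2*(1+ε)^4 := by
    rw [hM, hm]
    have h1 : (1+ε) ≠ 0 := by linarith
    field_simp
    ring
  calc sSup {d | ∃ z, dist z x = r ∧ d = dist (f z) (f x)} /
      sInf {d | ∃ z, dist z x = r ∧ d = dist (f z) (f x)} ≤ (M*r)/(m*r) := hratio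
    _ = M/m := heq2
    _ = 4*L^2*(1+ε)^4 := heq3
    _ ≤ K := hεK
end

section
/- For x, y in the unit ball 𝔹ⁿ, the distance ratio metric and the hyperbolic metric satisfy (1/2) ρ_{𝔹ⁿ}(x,y) ≤ j_{𝔹ⁿ}(x,y) ≤ ρ_{𝔹ⁿ}(x,y). -/
open Real Set Metric

set_option maxHeartbeats 1000000

private lemma arsinh_eq_log' (s : ℝ) : Real.arsinh s = Real.log (s + Real.sqrt (1 + s ^ 2)) := by
  rw [← Real.exp_arsinh, Real.log_exp]

private lemma key (a b t : ℝ) (ha : 0 < a) (hab : a ≤ b) (hb1 : b ≤ 1) (ht : 0 ≤ t)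
    (hsum : t ≤ 2 - a - b) (hba : b - a ≤ t) :
    Real.arsinh (t / (Real.sqrt (a * (2 - a)) * Real.sqrt (b * (2 - b)))) ≤
      Real.log (1 + t / a) ∧
    Real.log (1 + t / a) ≤
      2 * Real.arsinh (t / (Real.sqrt (a * (2 - a)) * Real.sqrt (b * (2 - b)))) := by
  have hb : 0 < b := lt_of_lt_of_le ha hab
  have ha1 : a ≤ 1 := le_trans hab hb1
  have hpa : (0:ℝ) < a * (2 - a) := by nlinarith
  have hpb : (0:ℝ) < b * (2 - b) := by nlinarith
  set A : ℝ := Real.sqrt (a * (2 - a)) * Real.sqrt (b * (2 - b)) with hAdef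
  have hA0 : 0 < A := mul_pos (Real.sqrt_pos.2 hpa) (Real.sqrt_pos.2 hpb)
  have hA2 : A ^ 2 = (a * (2 - a)) * (b * (2 - b)) := by
    rw [hAdef, mul_pow, Real.sq_sqrt hpa.le, Real.sq_sqrt hpb.le]
  set s : ℝ := t / A with hsdef
  have hs0 : 0 ≤ s := div_nonneg ht hA0.le
  set u : ℝ := 1 + t / a with hudef
  have hta : 0 ≤ t / a := div_nonneg ht ha.le
  have hu1 : (1:ℝ) ≤ u := by rw [hudef]; linarith
  have hu0 : 0 < u := lt_of_lt_of_le one_pos hu1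
  set r : ℝ := Real.sqrt (1 + s ^ 2) with hrdef
  have hr2 : r ^ 2 = 1 + s ^ 2 := Real.sq_sqrt (by positivity)
  have hr0 : 0 ≤ r := Real.sqrt_nonneg _
  have hr1 : 1 ≤ r := by nlinarith
  have hsru : Real.sqrt u ^ 2 = u := Real.sq_sqrt hu0.le
  have hsr0 : 0 < Real.sqrt u := Real.sqrt_pos.2 hu0
  clear_value r u s A
  constructor
  · -- arsinh s ≤ log u, i.e. ρ/2 ≤ j
    have hAl : a * (2 - a) ≤ A := by
      have h1 : Real.sqrt (a * (2 - a)) ≤ Real.sqrt (b * (2 - b)) := by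
        apply Real.sqrt_le_sqrt; nlinarith
      have h2 : Real.sqrt (a * (2 - a)) * Real.sqrt (a * (2 - a)) ≤ A := by
        rw [hAdef]
        exact mul_le_mul_of_nonneg_left h1 (Real.sqrt_nonneg _)
      rwa [Real.mul_self_sqrt hpa.le] at h2
    have hkey : 2 * a * (a + t) ≤ A * (2 * a + t) := by
      have h3 : 2 * a * (a + t) ≤ (a * (2 - a)) * (2 * a + t) := by
        have he : (a * (2 - a)) * (2 * a + t) - 2 * a * (a + t) = a ^ 2 * (2 - 2 * a - t) := by
          ring
        nlinarith [mul_nonneg (sq_nonneg a) (show (0:ℝ) ≤ 2 - 2 * a - t by linarith)]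
      have h4 : (a * (2 - a)) * (2 * a + t) ≤ A * (2 * a + t) :=
        mul_le_mul_of_nonneg_right hAl (by linarith)
      linarith
    have hsu : s * (2 * u) ≤ u ^ 2 - 1 := by
      have hu : u = (a + t) / a := by rw [hudef]; field_simp
      have hs : s ≤ t * (2 * a + t) / (2 * a * (a + t)) := by
        rw [hsdef, div_le_div_iff₀ hA0 (by nlinarith)]
        nlinarith
      have h5 : u ^ 2 - 1 = t * (2 * a + t) / a ^ 2 := by
        rw [hu]; field_simp; ring
      have h6 : 2 * u = 2 * (a + t) / a := by rw [hu]; ring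
      rw [h5, h6]
      calc s * (2 * (a + t) / a) ≤ (t * (2 * a + t) / (2 * a * (a + t))) * (2 * (a + t) / a) := by
            apply mul_le_mul_of_nonneg_right hs
            positivity
        _ = t * (2 * a + t) / a ^ 2 := by field_simp
    have hsu2 : s ≤ u := by nlinarith [hsu, mul_pos hu0 hu0]
    have hru : r ≤ u - s := by
      have h7 : (u - s) ^ 2 ≥ 1 + s ^ 2 := by nlinarith
      have h8 := Real.sqrt_le_sqrt h7.le
      rwa [← hrdef, Real.sqrt_sq (by linarith : 0 ≤ u - s)] at h8
    rw [arsinh_eq_log', ← hrdef]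
    exact Real.log_le_log (by linarith) (by linarith)
  · -- log u ≤ 2 arsinh s, i.e. j ≤ ρ
    have hA4 : A ^ 2 ≤ 4 * a * (a + t) := by
      have e0 : (0:ℝ) ≤ 2 * a + 2 * b - a * b := by nlinarith
      have e1 : A ^ 2 ≤ 4 * (a * b) := by
        nlinarith [hA2, mul_nonneg (mul_nonneg ha.le hb.le) e0]
      have e2 : 4 * (a * b) ≤ 4 * a * (a + t) := by nlinarith
      linarith
    have hau : a * Real.sqrt u = Real.sqrt (a * (a + t)) := by
      have h1 : a * (a + t) = a ^ 2 * u := by rw [hudef]; field_simp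
      rw [h1, Real.sqrt_mul (by positivity), Real.sqrt_sq ha.le]
    have hAle : A ≤ 2 * (a * Real.sqrt u) := by
      have h0 : (2 * (a * Real.sqrt u)) ^ 2 = 4 * a * (a + t) := by
        have : (2 * (a * Real.sqrt u)) ^ 2 = 4 * (a ^ 2 * Real.sqrt u ^ 2) := by ring
        rw [this, hsru, hudef]
        field_simp
      have h1 : A = Real.sqrt (A ^ 2) := by rw [Real.sqrt_sq hA0.le]
      have h2 : 2 * (a * Real.sqrt u) = Real.sqrt ((2 * (a * Real.sqrt u)) ^ 2) := by
        rw [Real.sqrt_sq (by positivity)]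
      rw [h1, h2]
      apply Real.sqrt_le_sqrt
      rw [h0]; exact hA4
    -- P1 : t / a ≤ 2 * s * √u
    have hP1 : t / a ≤ 2 * (s * Real.sqrt u) := by
      have h1 : s * Real.sqrt u = t * Real.sqrt u / A := by rw [hsdef]; ring
      have h2 : t * Real.sqrt u / (2 * (a * Real.sqrt u)) ≤ t * Real.sqrt u / A := by
        apply div_le_div_of_nonneg_left (by positivity) hA0 hAle
      have h3 : t * Real.sqrt u / (2 * (a * Real.sqrt u)) = t / (2 * a) := by
        rw [mul_comm a (Real.sqrt u)]
        rw [show 2 * (Real.sqrt u * a) = Real.sqrt u * (2 * a) by ring]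
        rw [mul_comm t (Real.sqrt u), mul_div_mul_left _ _ (ne_of_gt hsr0)]
      have h4 : t / a = 2 * (t / (2 * a)) := by field_simp
      rw [h4, h1]
      linarith
    -- √u ≤ s + r
    have hsum2 : Real.sqrt u ≤ s + r := by
      rcases le_or_gt (Real.sqrt u) s with h | h
      · linarith
      · have h7 : (Real.sqrt u - s) ^ 2 ≤ 1 + s ^ 2 := by nlinarith
        have h8 := Real.sqrt_le_sqrt h7
        rw [Real.sqrt_sq (by linarith : 0 ≤ Real.sqrt u - s), ← hrdef] at h8
        linarith
    have h9 : u ≤ (s + r) ^ 2 := by nlinarith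
    rw [arsinh_eq_log', ← hrdef,
      show 2 * Real.log (s + r) = Real.log ((s + r) ^ 2) by
        rw [Real.log_pow]; push_cast; ring]
    exact Real.log_le_log hu0 h9

/-- The hyperbolic metric of the unit ball:
`sinh(ρ(x,y)/2) = |x−y| / (√(1−|x|²)√(1−|y|²))`. -/
noncomputable def rhoBall {n : ℕ} (x y : EuclideanSpace ℝ (Fin n)) : ℝ :=
  2 * Real.arsinh (dist x y / (Real.sqrt (1 - ‖x‖ ^ 2) * Real.sqrt (1 - ‖y‖ ^ 2)))

/-- The distance ratio metric of the unit ball. -/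
noncomputable def jBall {n : ℕ} (x y : EuclideanSpace ℝ (Fin n)) : ℝ :=
  Real.log (1 + dist x y / min (1 - ‖x‖) (1 - ‖y‖))

/-- For `x, y ∈ 𝔹ⁿ`, `(1/2) ρ(x,y) ≤ j(x,y) ≤ ρ(x,y)`. -/
theorem half_rho_le_j_le_rho {n : ℕ} (hn : 2 ≤ n)
    (x y : EuclideanSpace ℝ (Fin n))
    (hx : x ∈ ball (0 : EuclideanSpace ℝ (Fin n)) 1)
    (hy : y ∈ ball (0 : EuclideanSpace ℝ (Fin n)) 1) :
    (1 / 2) * rhoBall x y ≤ jBall x y ∧ jBall x y ≤ rhoBall x y := by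
  rw [mem_ball_zero_iff] at hx hy
  set a : ℝ := 1 - ‖x‖ with hadef
  set b : ℝ := 1 - ‖y‖ with hbdef
  have ha : 0 < a := by simp [hadef]; linarith
  have hb : 0 < b := by simp [hbdef]; linarith
  have hxn : 0 ≤ ‖x‖ := norm_nonneg _
  have hyn : 0 ≤ ‖y‖ := norm_nonneg _
  have ha1 : a ≤ 1 := by rw [hadef]; linarith
  have hb1 : b ≤ 1 := by rw [hbdef]; linarith
  have ht : 0 ≤ dist x y := dist_nonneg
  have hsum : dist x y ≤ 2 - a - b := by
    rw [dist_eq_norm, hadef, hbdef]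
    have := norm_sub_le x y
    linarith
  have hba : b - a ≤ dist x y := by
    rw [dist_eq_norm, hadef, hbdef]
    have := norm_sub_norm_le x y
    linarith
  have hab' : a - b ≤ dist x y := by
    rw [dist_eq_norm, hadef, hbdef]
    have := norm_sub_norm_le y x
    have h2 : ‖y - x‖ = ‖x - y‖ := norm_sub_rev y x
    linarith
  have hx2 : 1 - ‖x‖ ^ 2 = a * (2 - a) := by rw [hadef]; ring
  have hy2 : 1 - ‖y‖ ^ 2 = b * (2 - b) := by rw [hbdef]; ring
  rw [rhoBall, jBall, hx2, hy2, ← hadef, ← hbdef]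
  rcases le_total a b with h | h
  · rw [min_eq_left h]
    have := key a b (dist x y) ha h hb1 ht hsum hba
    constructor <;> linarith [this.1, this.2]
  · rw [min_eq_right h]
    have := key b a (dist x y) hb h ha1 ht (by linarith) hab'
    rw [mul_comm (Real.sqrt (a * (2 - a)))]
    constructor <;> linarith [this.1, this.2]
end
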